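/- arXiv:2510.12626 — 4 statements merged into one kernel-verified Lean document; each statement's English description precedes it below -/
import Mathlib

section
/- For every function P : X → {1,…,ℓ} such that ζ^P_∅ ≠ 0, the fidelity deficit of the collision-free part satisfies 1 − |⟨φ^P, φ^P_0⟩|² ≤ Σ_{1 ≤ γ < β ≤ k} Σ_{x⃗ ∈ X^k with P(x_γ) = P(x_β)} w(x⃗). -/
lemma sum_pi_aux {k : ℕ} {Z : Type} [Fintype Z] (F : Fin k → Z → ℝ) :
    ∑ g : Fin k → Z, ∏ j, F j (g j) = ∏ j, ∑ z, F j z := by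
  classical
  rw [Finset.prod_univ_sum, Fintype.piFinset_univ]

/-- For every `P : X → Fin l` with `ζ^P_∅ ≠ 0`, the fidelity deficit of the
collision-free part satisfies
`1 − |⟨φ^P, φ^P_0⟩|² ≤ Σ_{γ<β} Σ_{x⃗ : P(x_γ)=P(x_β)} w(x⃗)`. -/
theorem stmt3 {X Y : Type} [Fintype X] [Fintype Y] [Nonempty X] [Nonempty Y]
    (k l : ℕ) (hk : 1 ≤ k) (hl : 1 ≤ l)
    (ψ : Fin l → Y → ℂ) (hψ : ∀ i, ∑ y, Complex.normSq (ψ i y) = 1)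
    (α : Fin k → X → ℂ) (hα : ∀ i, ∑ x, Complex.normSq (α i x) = 1)
    (w : (Fin k → X) → ℝ) (hw : ∀ v, w v = ∏ j, Complex.normSq (α j (v j)))
    (P : X → Fin l)
    (φ : (Fin k → X × Y) → ℂ)
    (hφ : ∀ z, φ z = ∏ j, α j (z j).1 * ψ (P (z j).1) (z j).2)
    (ζ : (Fin k → X × Y) → ℂ)
    (hζ : ∀ z, ζ z = if Function.Injective (fun j => P ((z j).1)) then φ z else 0)
    (hζne : ζ ≠ 0) :
    1 - Complex.normSq (∑ z, (starRingEnd ℂ) (φ z) *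
          (ζ z / ((Real.sqrt (∑ z', Complex.normSq (ζ z')) : ℝ) : ℂ)))
    ≤ ∑ p ∈ Finset.univ.filter (fun p : Fin k × Fin k => p.1 < p.2),
        ∑ v ∈ Finset.univ.filter (fun v : Fin k → X => P (v p.1) = P (v p.2)), w v := by
  classical
  set S := ∑ z', Complex.normSq (ζ z') with hSdef
  have hwnn : ∀ v, 0 ≤ w v := fun v => by
    rw [hw]; exact Finset.prod_nonneg fun j _ => Complex.normSq_nonneg _
  have hSpos : 0 < S := by
    rcases Function.ne_iff.mp hζne with ⟨z, hz⟩
    have h1 : 0 < Complex.normSq (ζ z) := by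
      simpa [Complex.normSq_pos] using hz
    exact lt_of_lt_of_le h1
      (Finset.single_le_sum (fun i _ => Complex.normSq_nonneg _) (Finset.mem_univ z))
  -- the inner product equals √S
  have hconj : ∀ z, (starRingEnd ℂ) (φ z) * ζ z = (Complex.normSq (ζ z) : ℂ) := by
    intro z
    rw [hζ]
    split
    · rw [mul_comm, Complex.mul_conj]
    · simp
  have hinner : (∑ z, (starRingEnd ℂ) (φ z) * (ζ z / ((Real.sqrt S : ℝ) : ℂ)))
      = ((Real.sqrt S : ℝ) : ℂ) := by
    have h1 : ∀ z : Fin k → X × Y, (starRingEnd ℂ) (φ z) * (ζ z / ((Real.sqrt S : ℝ) : ℂ))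
        = ((Complex.normSq (ζ z) : ℝ) : ℂ) / ((Real.sqrt S : ℝ) : ℂ) := by
      intro z; rw [mul_div_assoc', hconj]
    rw [Finset.sum_congr rfl fun z _ => h1 z, ← Finset.sum_div, ← Complex.ofReal_sum,
      ← hSdef, ← Complex.ofReal_div, Real.div_sqrt]
  rw [hinner, Complex.normSq_ofReal, Real.mul_self_sqrt hSpos.le]
  -- reduce sums over (X × Y)^k to sums over X^k
  have hφns : ∀ z : Fin k → X × Y, Complex.normSq (φ z)
      = ∏ j, Complex.normSq (α j (z j).1) * Complex.normSq (ψ (P (z j).1) (z j).2) := by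
    intro z; rw [hφ, map_prod]
    exact Finset.prod_congr rfl fun j _ => Complex.normSq_mul _ _
  have stepA : ∀ (c : (Fin k → X) → Prop) (_ : DecidablePred c),
      (∑ z : Fin k → X × Y, if c (fun j => (z j).1) then Complex.normSq (φ z) else 0)
      = ∑ v : Fin k → X, if c v then w v else 0 := by
    intro c hc
    let e := Equiv.arrowProdEquivProdArrow (Fin k) (fun _ => X) (fun _ => Y)
    rw [← Equiv.sum_comp e.symm
      (fun z : Fin k → X × Y => if c (fun j => (z j).1) then Complex.normSq (φ z) else 0)]
    rw [Fintype.sum_prod_type]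
    refine Finset.sum_congr rfl fun v _ => ?_
    have he : ∀ y : Fin k → Y, e.symm (v, y) = fun j => (v j, y j) := fun y => rfl
    simp only [he]
    by_cases hcv : c v
    · simp only [hcv, if_true]
      have h2 : ∀ y : Fin k → Y, Complex.normSq (φ fun j => (v j, y j))
          = w v * ∏ j, Complex.normSq (ψ (P (v j)) (y j)) := by
        intro y
        rw [hφns, Finset.prod_mul_distrib, hw]
      rw [Finset.sum_congr rfl fun y _ => h2 y, ← Finset.mul_sum,
        sum_pi_aux (fun j t => Complex.normSq (ψ (P (v j)) t))]
      simp [hψ]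
    · simp [hcv]
  have hsum1 : ∑ v : Fin k → X, w v = 1 := by
    rw [Finset.sum_congr rfl fun v _ => hw v, sum_pi_aux (fun j x => Complex.normSq (α j x))]
    simp [hα]
  have hS2 : S = ∑ v : Fin k → X,
      if Function.Injective (fun j => P (v j)) then w v else 0 := by
    have hζns : ∀ z : Fin k → X × Y, Complex.normSq (ζ z) =
        if Function.Injective (fun j => P ((z j).1)) then Complex.normSq (φ z) else 0 := by
      intro z; rw [hζ]; split <;> simp
    rw [hSdef, Finset.sum_congr rfl fun z _ => hζns z]
    exact stepA (fun v => Function.Injective fun j => P (v j)) _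
  have key : 1 - S = ∑ v : Fin k → X,
      if ¬ Function.Injective (fun j => P (v j)) then w v else 0 := by
    rw [hS2, ← hsum1, ← Finset.sum_sub_distrib]
    refine Finset.sum_congr rfl fun v _ => ?_
    split <;> simp_all
  rw [key]
  -- union bound
  have hrhs : ∀ p : Fin k × Fin k,
      (∑ v ∈ Finset.univ.filter (fun v : Fin k → X => P (v p.1) = P (v p.2)), w v)
      = ∑ v : Fin k → X, if P (v p.1) = P (v p.2) then w v else 0 := by
    intro p; rw [Finset.sum_filter]
  rw [Finset.sum_congr rfl fun p _ => hrhs p, Finset.sum_comm]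
  refine Finset.sum_le_sum fun v _ => ?_
  by_cases hinj : Function.Injective (fun j => P (v j))
  · simp only [hinj, not_true, if_false]
    exact Finset.sum_nonneg fun p _ => by split <;> simp [hwnn v]
  · simp only [hinj, not_false_iff, if_true]
    obtain ⟨a, b, heq, hab⟩ := Function.not_injective_iff.mp hinj
    rcases lt_or_gt_of_ne hab with h | h
    · have hmem : (a, b) ∈ Finset.univ.filter (fun p : Fin k × Fin k => p.1 < p.2) := by
        simp [h]
      have := Finset.single_le_sum
        (f := fun p : Fin k × Fin k => if P (v p.1) = P (v p.2) then w v else 0)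
        (fun p _ => by split <;> simp [hwnn v]) hmem
      simpa [heq] using this
    · have hmem : (b, a) ∈ Finset.univ.filter (fun p : Fin k × Fin k => p.1 < p.2) := by
        simp [h]
      have := Finset.single_le_sum
        (f := fun p : Fin k × Fin k => if P (v p.1) = P (v p.2) then w v else 0)
        (fun p _ => by split <;> simp [hwnn v]) hmem
      simpa [heq] using this
end

section
/- Suppose additionally that |α^{(i)}(x)|² ≤ ε for every i ∈ {1,…,k} and every x ∈ X. If P is drawn uniformly at random from the set of all functions X → {1,…,ℓ}, then E_P[ Σ_{x⃗ ∈ X^k such that P(x_1),…,P(x_k) are NOT pairwise distinct} w(x⃗) ] ≤ (k(k−1)/2)·(ε + 1/ℓ). In particular, whenever ζ^P_∅ ≠ 0, one has |⟨φ^P, φ^P_0⟩|² ≥ 1 − (k(k−1)/2)·(ε + 1/ℓ) on average over P. -/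
open Finset

section Aux

lemma aux_sum_prod {I T : Type*} [Fintype I] [DecidableEq I] [Fintype T] (f : I → T → ℝ) :
    ∑ u : I → T, ∏ i, f i (u i) = ∏ i, ∑ t, f i t := by
  rw [Finset.prod_univ_sum (fun _ => Finset.univ) f, Fintype.piFinset_univ]

lemma aux_count {X : Type*} [Fintype X] [DecidableEq X] (l : ℕ) (a b : X) (hab : a ≠ b) :
    (Finset.univ.filter (fun P : X → Fin l => P a = P b)).card * l
      ≤ Fintype.card (X → Fin l) := by
  classical
  have := Finset.card_le_card_of_injOn
    (s := (Finset.univ.filter (fun P : X → Fin l => P a = P b)) ×ˢ (Finset.univ : Finset (Fin l)))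
    (t := Finset.univ)
    (fun pc => Function.update pc.1 b pc.2) (fun _ _ => Finset.mem_univ _) ?_
  · simpa [Finset.card_product] using this
  · rintro ⟨P, c⟩ hm ⟨Q, d⟩ hm' h
    simp only [Finset.coe_product, Set.mem_prod, Finset.mem_coe, Finset.mem_filter,
      Finset.mem_univ, true_and] at hm hm'
    have hPQ : ∀ x, x ≠ b → P x = Q x := by
      intro x hx
      have := congrFun h x
      simpa [Function.update_of_ne hx] using this
    have hPQall : P = Q := by
      funext x
      by_cases hx : x = b
      · subst hx
        rw [← hm.1, ← hm'.1, hPQ a hab]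
      · exact hPQ x hx
    have hcd : c = d := by
      have := congrFun h b
      simpa [Function.update_self] using this
    simp [hPQall, hcd]

lemma aux_diag {X : Type*} [Fintype X] [DecidableEq X] (k : ℕ) (f : Fin k → X → ℝ)
    (hnn : ∀ m x, 0 ≤ f m x) (hsum : ∀ m, ∑ x, f m x = 1) (ε : ℝ) (hε0 : 0 ≤ ε)
    (i j : Fin k) (hij : i ≠ j) (hfε : ∀ x, f i x ≤ ε) :
    ∑ v ∈ Finset.univ.filter (fun v : Fin k → X => v i = v j), ∏ m, f m (v m) ≤ ε := by
  classical
  set G : ({m : Fin k // m ≠ i} → X) → ℝ := fun u => ∏ m : {m : Fin k // m ≠ i}, f m.1 (u m)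
    with hG
  have hGnn : ∀ u, 0 ≤ G u := fun u => Finset.prod_nonneg (fun m _ => hnn _ _)
  set r : (Fin k → X) → ({m : Fin k // m ≠ i} → X) := fun v m => v m.1 with hr
  have hpt : ∀ v : Fin k → X, ∏ m, f m (v m) ≤ ε * G (r v) := by
    intro v
    have h1 : ∏ m, f m (v m) = f i (v i) * ∏ m ∈ Finset.univ.erase i, f m (v m) :=
      (Finset.mul_prod_erase Finset.univ (fun m => f m (v m)) (Finset.mem_univ i)).symm
    have h2 : ∏ m ∈ Finset.univ.erase i, f m (v m)
        = ∏ m : {m : Fin k // m ≠ i}, f m.1 (v m.1) :=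
      Finset.prod_subtype _ (by simp) (fun m => f m (v m))
    rw [h1, h2]
    exact mul_le_mul_of_nonneg_right (hfε _) (Finset.prod_nonneg (fun m _ => hnn _ _))
  calc ∑ v ∈ Finset.univ.filter (fun v : Fin k → X => v i = v j), ∏ m, f m (v m)
      ≤ ∑ v ∈ Finset.univ.filter (fun v : Fin k → X => v i = v j), ε * G (r v) :=
        Finset.sum_le_sum (fun v _ => hpt v)
    _ = ε * ∑ v ∈ Finset.univ.filter (fun v : Fin k → X => v i = v j), G (r v) := by
        rw [Finset.mul_sum]
    _ ≤ ε * 1 := by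
        refine mul_le_mul_of_nonneg_left ?_ hε0
        have hinj : Set.InjOn r (Finset.univ.filter (fun v : Fin k → X => v i = v j)) := by
          intro v hv v' hv' h
          simp only [Finset.coe_filter, Set.mem_setOf_eq, Finset.mem_univ, true_and] at hv hv'
          funext m
          by_cases hm : m = i
          · subst hm
            have := congrFun h ⟨j, Ne.symm hij⟩
            simp only [r] at this
            rw [hv, hv', this]
          · exact congrFun h ⟨m, hm⟩
        rw [← Finset.sum_image hinj]
        have hle : ∑ u ∈ (Finset.univ.filter (fun v : Fin k → X => v i = v j)).image r, G u
            ≤ ∑ u : {m : Fin k // m ≠ i} → X, G u :=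
          Finset.sum_le_sum_of_subset_of_nonneg (Finset.subset_univ _)
            (fun u _ _ => hGnn u)
        refine hle.trans ?_
        rw [hG]
        rw [aux_sum_prod (fun (m : {m : Fin k // m ≠ i}) (x : X) => f m.1 x)]
        rw [Finset.prod_congr rfl (fun m _ => hsum m.1)]
        simp
    _ = ε := mul_one ε

lemma aux_pairs (k : ℕ) :
    (Finset.univ.filter (fun p : Fin k × Fin k => p.1 < p.2)).card * 2 ≤ k * (k - 1) := by
  classical
  set S := Finset.univ.filter (fun p : Fin k × Fin k => p.1 < p.2) with hS
  have h := Finset.card_le_card_of_injOn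
    (s := S ×ˢ (Finset.univ : Finset Bool))
    (t := (Finset.univ : Finset (Fin k)).offDiag)
    (fun pb => if pb.2 then pb.1 else pb.1.swap) ?_ ?_
  · have hcard : (S ×ˢ (Finset.univ : Finset Bool)).card = S.card * 2 := by
      simp [Finset.card_product]
    rw [hcard] at h
    have hod : ((Finset.univ : Finset (Fin k)).offDiag).card = k * k - k := by
      simp [Finset.offDiag_card]
    rw [hod] at h
    have hkk : k * (k - 1) = k * k - k := by
      rw [Nat.mul_sub, Nat.mul_one]
    omega
  · rintro ⟨⟨a, b⟩, c⟩ hm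
    simp only [hS, Finset.mem_coe, Finset.mem_product, Finset.mem_filter, Finset.mem_univ, true_and] at hm
    rcases c with _ | _ <;>
      simp [Finset.mem_offDiag, Prod.swap, ne_of_lt hm.1, ne_of_gt hm.1]
  · rintro ⟨⟨a, b⟩, c⟩ hm ⟨⟨a', b'⟩, c'⟩ hm' h
    simp only [hS, Finset.coe_product, Set.mem_prod, Finset.mem_coe, Finset.mem_filter,
      Finset.mem_univ, true_and] at hm hm'
    replace hm := hm.1
    replace hm' := hm'.1
    rcases c with _ | _ <;> rcases c' with _ | _ <;>
      simp_all [Prod.swap, Prod.ext_iff] <;> omega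

end Aux


/-- Assume additionally `|α^{(i)}(x)|² ≤ ε` for all `i, x`. Over a uniformly
random `P : X → Fin l`,
`E_P[ Σ_{x⃗ : P(x_1),…,P(x_k) not pairwise distinct} w(x⃗) ] ≤ (k(k−1)/2)·(ε + 1/l)`.
In particular, any nonnegative quantity `fid` that agrees with the squared fidelity
`|⟨φ^P, φ^P_0⟩|²` whenever `ζ^P_∅ ≠ 0` satisfies
`E_P[fid P] ≥ 1 − (k(k−1)/2)·(ε + 1/l)`. -/
theorem stmt4 {X Y : Type} [Fintype X] [DecidableEq X] [Fintype Y] [Nonempty X] [Nonempty Y]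
    (k l : ℕ) (hk : 1 ≤ k) (hl : 1 ≤ l) (ε : ℝ) (hε : 0 ≤ ε)
    (ψ : Fin l → Y → ℂ) (hψ : ∀ i, ∑ y, Complex.normSq (ψ i y) = 1)
    (α : Fin k → X → ℂ) (hα : ∀ i, ∑ x, Complex.normSq (α i x) = 1)
    (hαε : ∀ i x, Complex.normSq (α i x) ≤ ε)
    (w : (Fin k → X) → ℝ) (hw : ∀ v, w v = ∏ j, Complex.normSq (α j (v j)))
    (φ : (X → Fin l) → (Fin k → X × Y) → ℂ)
    (hφ : ∀ P z, φ P z = ∏ j, α j (z j).1 * ψ (P (z j).1) (z j).2)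
    (ζ : (X → Fin l) → (Fin k → X × Y) → ℂ)
    (hζ : ∀ P z, ζ P z = if Function.Injective (fun j => P ((z j).1)) then φ P z else 0) :
    ((∑ P : X → Fin l, ∑ v ∈ Finset.univ.filter
        (fun v : Fin k → X => ¬ Function.Injective (fun j => P (v j))), w v)
      / (Fintype.card (X → Fin l) : ℝ)
      ≤ ((k : ℝ) * ((k : ℝ) - 1) / 2) * (ε + 1 / l)) ∧
    (∀ fid : (X → Fin l) → ℝ,
      (∀ P, 0 ≤ fid P) →
      (∀ P, ζ P ≠ 0 →
        fid P = Complex.normSq (∑ z, (starRingEnd ℂ) (φ P z) *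
          (ζ P z / ((Real.sqrt (∑ z', Complex.normSq (ζ P z')) : ℝ) : ℂ)))) →
      1 - ((k : ℝ) * ((k : ℝ) - 1) / 2) * (ε + 1 / l)
        ≤ (∑ P : X → Fin l, fid P) / (Fintype.card (X → Fin l) : ℝ)) := by
  -- basic notation
  have hlpos : (0:ℝ) < l := by exact_mod_cast hl
  have : Nonempty (Fin l) := ⟨⟨0, hl⟩⟩
  set N : ℝ := (Fintype.card (X → Fin l) : ℝ) with hNdef
  have hNpos : (0:ℝ) < N := by
    rw [hNdef]
    exact_mod_cast (Fintype.card_pos : 0 < Fintype.card (X → Fin l))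
  set f : Fin k → X → ℝ := fun m x => Complex.normSq (α m x) with hf
  have hfnn : ∀ m x, 0 ≤ f m x := fun m x => Complex.normSq_nonneg _
  have hwnn : ∀ v, 0 ≤ w v := by
    intro v; rw [hw]; exact Finset.prod_nonneg (fun m _ => Complex.normSq_nonneg _)
  have hwsum : ∑ v : Fin k → X, w v = 1 := by
    calc ∑ v : Fin k → X, w v = ∑ v : Fin k → X, ∏ m, f m (v m) := by
          exact Finset.sum_congr rfl (fun v _ => hw v)
      _ = ∏ m, ∑ x, f m x := aux_sum_prod f
      _ = 1 := by rw [Finset.prod_congr rfl (fun m _ => hα m)]; simp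
  set S : Finset (Fin k × Fin k) := Finset.univ.filter (fun p => p.1 < p.2) with hSdef
  have hScard : (S.card : ℝ) ≤ (k:ℝ) * ((k:ℝ) - 1) / 2 := by
    have h := aux_pairs k
    have h2 : ((S.card * 2 : ℕ) : ℝ) ≤ ((k * (k-1) : ℕ) : ℝ) := by exact_mod_cast h
    rw [Nat.cast_mul, Nat.cast_mul, Nat.cast_sub hk] at h2
    push_cast at h2
    linarith
  -- the key average bound
  have hmain : (∑ P : X → Fin l, ∑ v ∈ Finset.univ.filter
        (fun v : Fin k → X => ¬ Function.Injective (fun j => P (v j))), w v)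
      ≤ N * (((k:ℝ) * ((k:ℝ) - 1) / 2) * (ε + 1 / l)) := by
    have stepA : ∀ P : X → Fin l,
        (∑ v ∈ Finset.univ.filter
          (fun v : Fin k → X => ¬ Function.Injective (fun j => P (v j))), w v)
        ≤ ∑ p ∈ S, ∑ v : Fin k → X,
            w v * (if P (v p.1) = P (v p.2) then (1:ℝ) else 0) := by
      intro P
      have hlb : ∀ v ∈ Finset.univ.filter
          (fun v : Fin k → X => ¬ Function.Injective (fun j => P (v j))),
          w v ≤ w v * ∑ p ∈ S, (if P (v p.1) = P (v p.2) then (1:ℝ) else 0) := by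
        intro v hv
        rw [Finset.mem_filter] at hv
        obtain ⟨a, b, hab, hne⟩ := Function.not_injective_iff.mp hv.2
        have h1 : (1:ℝ) ≤ ∑ p ∈ S, (if P (v p.1) = P (v p.2) then (1:ℝ) else 0) := by
          rcases hne.lt_or_gt with h | h
          · have hmem : (a, b) ∈ S := by simp [hSdef, h]
            have := Finset.single_le_sum
              (f := fun p : Fin k × Fin k => (if P (v p.1) = P (v p.2) then (1:ℝ) else 0))
              (fun p _ => by positivity) hmem
            simpa [hab] using this
          · have hmem : (b, a) ∈ S := by simp [hSdef, h]
            have := Finset.single_le_sum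
              (f := fun p : Fin k × Fin k => (if P (v p.1) = P (v p.2) then (1:ℝ) else 0))
              (fun p _ => by positivity) hmem
            simpa [hab.symm] using this
        exact le_mul_of_one_le_right (hwnn v) h1
      calc (∑ v ∈ Finset.univ.filter
          (fun v : Fin k → X => ¬ Function.Injective (fun j => P (v j))), w v)
          ≤ ∑ v ∈ Finset.univ.filter
              (fun v : Fin k → X => ¬ Function.Injective (fun j => P (v j))),
              w v * ∑ p ∈ S, (if P (v p.1) = P (v p.2) then (1:ℝ) else 0) :=
            Finset.sum_le_sum hlb
        _ ≤ ∑ v : Fin k → X,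
              w v * ∑ p ∈ S, (if P (v p.1) = P (v p.2) then (1:ℝ) else 0) := by
            refine Finset.sum_le_sum_of_subset_of_nonneg (Finset.filter_subset _ _) ?_
            intro v _ _
            refine mul_nonneg (hwnn v) (Finset.sum_nonneg (fun p _ => by positivity))
        _ = ∑ v : Fin k → X, ∑ p ∈ S,
              w v * (if P (v p.1) = P (v p.2) then (1:ℝ) else 0) :=
            Finset.sum_congr rfl (fun v _ => Finset.mul_sum ..)
        _ = ∑ p ∈ S, ∑ v : Fin k → X,
              w v * (if P (v p.1) = P (v p.2) then (1:ℝ) else 0) := Finset.sum_comm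
    -- count lemma over P
    have hcnt : ∀ a b : X, ∑ P : X → Fin l, (if P a = P b then (1:ℝ) else 0)
        ≤ N * (if a = b then (1:ℝ) else 0) + N / l := by
      intro a b
      by_cases hab : a = b
      · subst hab
        have h1 : ∑ P : X → Fin l, (if P a = P a then (1:ℝ) else 0) = N := by
          simp [hNdef]
        rw [h1, if_pos rfl]
        have : 0 ≤ N / l := le_of_lt (div_pos hNpos hlpos)
        linarith
      · simp only [if_neg hab]
        have hsb : ∑ P : X → Fin l, (if P a = P b then (1:ℝ) else 0)
            = ((Finset.univ.filter (fun P : X → Fin l => P a = P b)).card : ℝ) := by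
          rw [Finset.sum_boole]
        rw [hsb]
        have h := aux_count l a b hab
        have h2 : ((Finset.univ.filter (fun P : X → Fin l => P a = P b)).card : ℝ) * l
            ≤ N := by rw [hNdef]; exact_mod_cast h
        have h3 : ((Finset.univ.filter (fun P : X → Fin l => P a = P b)).card : ℝ) ≤ N / l :=
          (le_div_iff₀ hlpos).mpr h2
        linarith
    have stepC : ∀ p ∈ S, (∑ P : X → Fin l, ∑ v : Fin k → X,
        w v * (if P (v p.1) = P (v p.2) then (1:ℝ) else 0)) ≤ N * (ε + 1 / l) := by
      intro p hp
      have hplt : p.1 < p.2 := by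
        have := Finset.mem_filter.mp hp
        exact this.2
      have hpne : p.1 ≠ p.2 := ne_of_lt hplt
      have hdiag : ∑ v : Fin k → X, w v * (if v p.1 = v p.2 then (1:ℝ) else 0) ≤ ε := by
        have h1 : ∑ v : Fin k → X, w v * (if v p.1 = v p.2 then (1:ℝ) else 0)
            = ∑ v ∈ Finset.univ.filter (fun v : Fin k → X => v p.1 = v p.2), w v := by
          rw [Finset.sum_filter]
          exact Finset.sum_congr rfl (fun v _ => by
            by_cases hc : v p.1 = v p.2 <;> simp [hc])
        rw [h1, Finset.sum_congr rfl (fun v _ => hw v)]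
        exact aux_diag k f hfnn (fun m => hα m) ε hε p.1 p.2 hpne (fun x => hαε p.1 x)
      calc (∑ P : X → Fin l, ∑ v : Fin k → X,
            w v * (if P (v p.1) = P (v p.2) then (1:ℝ) else 0))
          = ∑ v : Fin k → X, ∑ P : X → Fin l,
            w v * (if P (v p.1) = P (v p.2) then (1:ℝ) else 0) := Finset.sum_comm
        _ = ∑ v : Fin k → X, w v * ∑ P : X → Fin l,
            (if P (v p.1) = P (v p.2) then (1:ℝ) else 0) :=
            Finset.sum_congr rfl (fun v _ => (Finset.mul_sum ..).symm)
        _ ≤ ∑ v : Fin k → X, w v * (N * (if v p.1 = v p.2 then (1:ℝ) else 0) + N / l) :=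
            Finset.sum_le_sum (fun v _ =>
              mul_le_mul_of_nonneg_left (hcnt (v p.1) (v p.2)) (hwnn v))
        _ = N * (∑ v : Fin k → X, w v * (if v p.1 = v p.2 then (1:ℝ) else 0))
            + (N / l) * ∑ v : Fin k → X, w v := by
            simp only [mul_add]
            rw [Finset.sum_add_distrib, Finset.mul_sum, Finset.mul_sum]
            congr 1
            · exact Finset.sum_congr rfl (fun v _ => by ring)
            · exact Finset.sum_congr rfl (fun v _ => by ring)
        _ ≤ N * ε + (N / l) * 1 := by
            rw [hwsum]
            have := mul_le_mul_of_nonneg_left hdiag hNpos.le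
            linarith
        _ = N * (ε + 1 / l) := by ring
    calc (∑ P : X → Fin l, ∑ v ∈ Finset.univ.filter
          (fun v : Fin k → X => ¬ Function.Injective (fun j => P (v j))), w v)
        ≤ ∑ P : X → Fin l, ∑ p ∈ S, ∑ v : Fin k → X,
            w v * (if P (v p.1) = P (v p.2) then (1:ℝ) else 0) :=
          Finset.sum_le_sum (fun P _ => stepA P)
      _ = ∑ p ∈ S, ∑ P : X → Fin l, ∑ v : Fin k → X,
            w v * (if P (v p.1) = P (v p.2) then (1:ℝ) else 0) := Finset.sum_comm
      _ ≤ ∑ _p ∈ S, N * (ε + 1 / l) := Finset.sum_le_sum stepC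
      _ = (S.card : ℝ) * (N * (ε + 1 / l)) := by rw [Finset.sum_const, nsmul_eq_mul]
      _ ≤ ((k:ℝ) * ((k:ℝ) - 1) / 2) * (N * (ε + 1 / l)) := by
          refine mul_le_mul_of_nonneg_right hScard ?_
          positivity
      _ = N * (((k:ℝ) * ((k:ℝ) - 1) / 2) * (ε + 1 / l)) := by ring
  constructor
  · rw [div_le_iff₀ hNpos]
    linarith
  · intro fid hfid0 hfid
    set good : (X → Fin l) → ℝ := fun P => ∑ z, Complex.normSq (ζ P z) with hgdef
    have h_reindex : ∀ (F : (Fin k → X × Y) → ℝ),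
        ∑ z, F z = ∑ v : Fin k → X, ∑ y : Fin k → Y, F (fun j => (v j, y j)) := by
      intro F
      rw [← Equiv.sum_comp (Equiv.arrowProdEquivProdArrow (Fin k) (fun _ => X) (fun _ => Y)).symm F,
        Fintype.sum_prod_type]
      rfl
    have h_y : ∀ (P : X → Fin l) (v : Fin k → X),
        ∑ y : Fin k → Y, Complex.normSq (φ P (fun j => (v j, y j))) = w v := by
      intro P v
      have hpt : ∀ y : Fin k → Y, Complex.normSq (φ P (fun j => (v j, y j)))
          = ∏ j, (f j (v j) * Complex.normSq (ψ (P (v j)) (y j))) := by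
        intro y
        rw [hφ, map_prod Complex.normSq]
        exact Finset.prod_congr rfl (fun j _ => by simp [Complex.normSq_mul, hf])
      rw [Finset.sum_congr rfl (fun y _ => hpt y),
        aux_sum_prod (fun j t => f j (v j) * Complex.normSq (ψ (P (v j)) t)), hw]
      refine Finset.prod_congr rfl (fun j _ => ?_)
      rw [← Finset.mul_sum, hψ, mul_one]
    have h_good : ∀ P : X → Fin l, good P = ∑ v ∈ Finset.univ.filter
        (fun v : Fin k → X => Function.Injective (fun j => P (v j))), w v := by
      intro P
      have h1 : ∀ z : Fin k → X × Y, Complex.normSq (ζ P z) =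
          if Function.Injective (fun j => P ((z j).1)) then Complex.normSq (φ P z) else 0 := by
        intro z
        rw [hζ]
        split <;> simp
      calc good P = ∑ z, (if Function.Injective (fun j => P ((z j).1))
              then Complex.normSq (φ P z) else 0) :=
            Finset.sum_congr rfl (fun z _ => h1 z)
        _ = ∑ v : Fin k → X, ∑ y : Fin k → Y,
            (if Function.Injective (fun j => P (v j))
              then Complex.normSq (φ P (fun j => (v j, y j))) else 0) :=
            h_reindex _
        _ = ∑ v : Fin k → X, (if Function.Injective (fun j => P (v j)) then w v else 0) := by
            refine Finset.sum_congr rfl (fun v _ => ?_)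
            by_cases hc : Function.Injective (fun j => P (v j))
            · simp only [if_pos hc]
              exact h_y P v
            · simp [hc]
        _ = ∑ v ∈ Finset.univ.filter
            (fun v : Fin k → X => Function.Injective (fun j => P (v j))), w v :=
            (Finset.sum_filter _ _).symm
    have h_gb : ∀ P : X → Fin l, good P = 1 - ∑ v ∈ Finset.univ.filter
        (fun v : Fin k → X => ¬ Function.Injective (fun j => P (v j))), w v := by
      intro P
      have := Finset.sum_filter_add_sum_filter_not Finset.univ
        (fun v : Fin k → X => Function.Injective (fun j => P (v j))) w
      rw [hwsum] at this
      rw [h_good P]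
      linarith
    have h_fidge : ∀ P : X → Fin l, good P ≤ fid P := by
      intro P
      by_cases hz : ζ P = 0
      · have h0 : good P = 0 := by
          rw [hgdef]
          refine Finset.sum_eq_zero (fun z _ => ?_)
          rw [congrFun hz z]
          simp
        rw [h0]
        exact hfid0 P
      · have hgnn : 0 ≤ good P :=
          Finset.sum_nonneg (fun z _ => Complex.normSq_nonneg _)
        have hgne : good P ≠ 0 := by
          intro h0
          apply hz
          funext z
          have := (Finset.sum_eq_zero_iff_of_nonneg
            (fun z _ => Complex.normSq_nonneg (ζ P z))).mp h0 z (Finset.mem_univ z)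
          exact Complex.normSq_eq_zero.mp this
        rw [hfid P hz]
        have hc : (∑ z', Complex.normSq (ζ P z')) = good P := rfl
        have hsumeq : (∑ z, (starRingEnd ℂ) (φ P z) *
            (ζ P z / ((Real.sqrt (∑ z', Complex.normSq (ζ P z')) : ℝ) : ℂ)))
            = ((good P : ℝ) : ℂ) / ((Real.sqrt (good P) : ℝ) : ℂ) := by
          rw [hc]
          simp only [← mul_div_assoc]
          rw [← Finset.sum_div]
          congr 1
          have hpt : ∀ z : Fin k → X × Y, (starRingEnd ℂ) (φ P z) * ζ P z
              = ((Complex.normSq (ζ P z) : ℝ) : ℂ) := by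
            intro z
            rw [hζ]
            split
            · rw [mul_comm, Complex.mul_conj]
            · simp
          rw [Finset.sum_congr rfl (fun z _ => hpt z), hgdef]
          norm_cast
        rw [hsumeq, Complex.normSq_div, Complex.normSq_ofReal, Complex.normSq_ofReal,
          Real.mul_self_sqrt hgnn, mul_div_assoc, div_self hgne, mul_one]
    have hsum_ge : ∑ P : X → Fin l, good P ≤ ∑ P : X → Fin l, fid P :=
      Finset.sum_le_sum (fun P _ => h_fidge P)
    have hgoodsum : ∑ P : X → Fin l, good P
        = N - ∑ P : X → Fin l, ∑ v ∈ Finset.univ.filter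
            (fun v : Fin k → X => ¬ Function.Injective (fun j => P (v j))), w v := by
      rw [Finset.sum_congr rfl (fun P _ => h_gb P), Finset.sum_sub_distrib]
      simp [hNdef]
    rw [le_div_iff₀ hNpos]
    linarith
end

section
/- Let R be a nonempty finite set, and for each r ∈ R and each i ∈ {1,…,n} let M_r^{(i)} ∈ M_{X_i}(ℂ) be an orthogonal projection. Set P^{(i)} = (1/|R|)·Σ_{r∈R} M_r^{(i)} (a Hermitian positive semidefinite matrix with P^{(i)} ≤ I), let η ∈ [0,1], and let Π^{(i)} be the orthogonal projection onto the sum of the eigenspaces of P^{(i)} corresponding to eigenvalues strictly greater than η. Then for every unit vector ψ ∈ ℂ^{X_1×⋯×X_n}: (1/|R|)·Σ_{r∈R} ‖(M_r^{(1)} ⊗ ⋯ ⊗ M_r^{(n)})ψ‖² ≤ (n+1)·( η + ‖(Π^{(1)} ⊗ ⋯ ⊗ Π^{(n)})ψ‖² ). -/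
open Finset Complex Matrix

set_option linter.unusedSectionVars false

section Aux

variable {n : ℕ} {X : Fin n → Type} [∀ i, Fintype (X i)] [∀ i, DecidableEq (X i)]

/-- tensor product action -/
noncomputable def tn (A : (i : Fin n) → Matrix (X i) (X i) ℂ)
    (v : ((i : Fin n) → X i) → ℂ) : ((i : Fin n) → X i) → ℂ :=
  fun xx => ∑ yy, (∏ i, A i (xx i) (yy i)) * v yy

noncomputable def inn (u v : ((i : Fin n) → X i) → ℂ) : ℂ :=
  ∑ x, (starRingEnd ℂ) (u x) * v x

noncomputable def nsq (v : ((i : Fin n) → X i) → ℂ) : ℝ :=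
  ∑ x, Complex.normSq (v x)

lemma nsq_nonneg (v : ((i : Fin n) → X i) → ℂ) : 0 ≤ nsq v :=
  Finset.sum_nonneg fun _ _ => Complex.normSq_nonneg _

lemma inn_self (v : ((i : Fin n) → X i) → ℂ) : inn v v = (nsq v : ℂ) := by
  unfold inn nsq
  push_cast
  refine Finset.sum_congr rfl fun x _ => ?_
  rw [mul_comm, Complex.mul_conj]

lemma inn_conj (u v : ((i : Fin n) → X i) → ℂ) :
    (starRingEnd ℂ) (inn u v) = inn v u := by
  unfold inn
  rw [map_sum]
  refine Finset.sum_congr rfl fun x _ => ?_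
  simp [mul_comm]

lemma cs (u v : ((i : Fin n) → X i) → ℂ) :
    ‖inn u v‖ ≤ Real.sqrt (nsq u) * Real.sqrt (nsq v) := by
  have h1 : ‖inn u v‖ ≤ ∑ x, ‖u x‖ * ‖v x‖ := by
    refine (norm_sum_le _ _).trans (le_of_eq (Finset.sum_congr rfl fun x _ => ?_))
    rw [norm_mul, Complex.norm_conj]
  refine h1.trans ?_
  have h2 : (∑ x, ‖u x‖ * ‖v x‖) ^ 2 ≤
      (∑ x, ‖u x‖ ^ 2) * (∑ x, ‖v x‖ ^ 2) :=
    Finset.sum_mul_sq_le_sq_mul_sq _ _ _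
  have hu : ∑ x, ‖u x‖ ^ 2 = nsq u := by
    refine Finset.sum_congr rfl fun x _ => ?_
    rw [← Complex.normSq_eq_norm_sq]
  have hv : ∑ x, ‖v x‖ ^ 2 = nsq v := by
    refine Finset.sum_congr rfl fun x _ => ?_
    rw [← Complex.normSq_eq_norm_sq]
  rw [hu, hv] at h2
  have hnn : 0 ≤ ∑ x, ‖u x‖ * ‖v x‖ :=
    Finset.sum_nonneg fun x _ => mul_nonneg (norm_nonneg _) (norm_nonneg _)
  calc (∑ x, ‖u x‖ * ‖v x‖)
      = Real.sqrt ((∑ x, ‖u x‖ * ‖v x‖) ^ 2) := by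
        rw [Real.sqrt_sq hnn]
    _ ≤ Real.sqrt (nsq u * nsq v) := Real.sqrt_le_sqrt h2
    _ = Real.sqrt (nsq u) * Real.sqrt (nsq v) :=
        Real.sqrt_mul (nsq_nonneg u) _

lemma tn_comp (A B : (i : Fin n) → Matrix (X i) (X i) ℂ) (v : ((i : Fin n) → X i) → ℂ) :
    tn A (tn B v) = tn (fun i => A i * B i) v := by
  funext xx
  unfold tn
  simp only [Finset.mul_sum]
  rw [Finset.sum_comm]
  refine Finset.sum_congr rfl fun zz _ => ?_
  have step1 : ∀ yy ∈ (Finset.univ : Finset ((i : Fin n) → X i)),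
      (∏ i, A i (xx i) (yy i)) * ((∏ i, B i (yy i) (zz i)) * v zz)
      = (∏ i, A i (xx i) (yy i) * B i (yy i) (zz i)) * v zz := by
    intro yy _
    rw [← mul_assoc, ← Finset.prod_mul_distrib]
  rw [Finset.sum_congr rfl step1, ← Finset.sum_mul]
  congr 1
  simp only [Matrix.mul_apply]
  rw [Finset.prod_univ_sum, Fintype.piFinset_univ]

lemma tn_adj (A : (i : Fin n) → Matrix (X i) (X i) ℂ) (u v : ((i : Fin n) → X i) → ℂ) :
    inn (tn A u) v = inn u (tn (fun i => (A i).conjTranspose) v) := by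
  unfold inn tn
  simp only [map_sum, _root_.map_mul, Finset.sum_mul, Finset.mul_sum]
  rw [Finset.sum_comm]
  refine Finset.sum_congr rfl fun yy _ => ?_
  refine Finset.sum_congr rfl fun xx _ => ?_
  rw [map_prod]
  have : ∀ i ∈ (Finset.univ : Finset (Fin n)),
      (starRingEnd ℂ) (A i (xx i) (yy i)) = (A i).conjTranspose (yy i) (xx i) := by
    intro i _
    rw [Matrix.conjTranspose_apply]
    rfl
  rw [Finset.prod_congr rfl this]
  ring

lemma tn_one (v : ((i : Fin n) → X i) → ℂ) :
    tn (fun i => (1 : Matrix (X i) (X i) ℂ)) v = v := by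
  funext xx
  unfold tn
  rw [Finset.sum_eq_single xx]
  · simp [Matrix.one_apply]
  · intro yy _ hne
    have : ∃ i, yy i ≠ xx i := by
      by_contra h
      push_neg at h
      exact hne (funext h)
    obtain ⟨i, hi⟩ := this
    rw [Finset.prod_eq_zero (Finset.mem_univ i), zero_mul]
    exact Matrix.one_apply_ne (Ne.symm hi)
  · intro h
    exact absurd (Finset.mem_univ xx) h

lemma tn_zero (A : (i : Fin n) → Matrix (X i) (X i) ℂ) (i0 : Fin n) (h : A i0 = 0)
    (v : ((i : Fin n) → X i) → ℂ) : tn A v = 0 := by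
  funext xx
  unfold tn
  rw [Finset.sum_eq_zero]
  · rfl
  intro yy _
  rw [Finset.prod_eq_zero (Finset.mem_univ i0), zero_mul]
  rw [h]
  rfl

lemma tn_update_apply (A : (i : Fin n) → Matrix (X i) (X i) ℂ) (i : Fin n)
    (B : Matrix (X i) (X i) ℂ) (v : ((i : Fin n) → X i) → ℂ) (xx : (i : Fin n) → X i) :
    tn (Function.update A i B) v xx
      = ∑ yy, B (xx i) (yy i) * ((∏ j ∈ {i}ᶜ, A j (xx j) (yy j)) * v yy) := by
  unfold tn
  refine Finset.sum_congr rfl fun yy _ => ?_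
  rw [Fintype.prod_eq_mul_prod_compl i]
  rw [Function.update_self]
  rw [mul_assoc]
  congr 2
  refine Finset.prod_congr rfl fun j hj => ?_
  rw [Function.update_of_ne (Finset.mem_compl.mp hj ∘ Finset.mem_singleton.mpr)]

lemma tn_update_add (A : (i : Fin n) → Matrix (X i) (X i) ℂ) (i : Fin n)
    (B C : Matrix (X i) (X i) ℂ) (v : ((i : Fin n) → X i) → ℂ) :
    tn (Function.update A i (B + C)) v
      = tn (Function.update A i B) v + tn (Function.update A i C) v := by
  funext xx
  simp only [Pi.add_apply, tn_update_apply, Matrix.add_apply, add_mul, Finset.sum_add_distrib]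

lemma tn_update_smul (A : (i : Fin n) → Matrix (X i) (X i) ℂ) (i : Fin n) (c : ℂ)
    (B : Matrix (X i) (X i) ℂ) (v : ((i : Fin n) → X i) → ℂ) :
    tn (Function.update A i (c • B)) v = c • tn (Function.update A i B) v := by
  funext xx
  simp only [Pi.smul_apply, tn_update_apply, Matrix.smul_apply, smul_eq_mul,
    Finset.mul_sum, mul_assoc]

lemma tn_update_sum {κ : Type} (s : Finset κ) (A : (i : Fin n) → Matrix (X i) (X i) ℂ)
    (i : Fin n) (B : κ → Matrix (X i) (X i) ℂ) (v : ((i : Fin n) → X i) → ℂ) :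
    tn (Function.update A i (∑ k ∈ s, B k)) v = ∑ k ∈ s, tn (Function.update A i (B k)) v := by
  funext xx
  simp only [Finset.sum_apply, tn_update_apply, Matrix.sum_apply, Finset.sum_mul]
  rw [Finset.sum_comm]

lemma tn_add_v (A : (i : Fin n) → Matrix (X i) (X i) ℂ) (u w : ((i : Fin n) → X i) → ℂ) :
    tn A (u + w) = tn A u + tn A w := by
  funext xx
  simp only [tn, Pi.add_apply, mul_add, Finset.sum_add_distrib]

lemma tn_sum_v {κ : Type} (s : Finset κ) (A : (i : Fin n) → Matrix (X i) (X i) ℂ)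
    (u : κ → ((i : Fin n) → X i) → ℂ) :
    tn A (∑ k ∈ s, u k) = ∑ k ∈ s, tn A (u k) := by
  funext xx
  simp only [tn, Finset.sum_apply, Finset.mul_sum]
  rw [Finset.sum_comm]

lemma inn_add_left (u w v : ((i : Fin n) → X i) → ℂ) :
    inn (u + w) v = inn u v + inn w v := by
  simp only [inn, Pi.add_apply, map_add, add_mul, Finset.sum_add_distrib]

lemma inn_add_right (v u w : ((i : Fin n) → X i) → ℂ) :
    inn v (u + w) = inn v u + inn v w := by
  simp only [inn, Pi.add_apply, mul_add, Finset.sum_add_distrib]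

lemma inn_sum_left {κ : Type} (s : Finset κ) (u : κ → ((i : Fin n) → X i) → ℂ)
    (v : ((i : Fin n) → X i) → ℂ) :
    inn (∑ k ∈ s, u k) v = ∑ k ∈ s, inn (u k) v := by
  simp only [inn, Finset.sum_apply, map_sum, Finset.sum_mul]
  rw [Finset.sum_comm]

lemma inn_sum_right {κ : Type} (s : Finset κ) (v : ((i : Fin n) → X i) → ℂ)
    (u : κ → ((i : Fin n) → X i) → ℂ) :
    inn v (∑ k ∈ s, u k) = ∑ k ∈ s, inn v (u k) := by
  simp only [inn, Finset.sum_apply, Finset.mul_sum]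
  rw [Finset.sum_comm]

/-- family of Hermitian idempotents -/
def ProjFam (A : (i : Fin n) → Matrix (X i) (X i) ℂ) : Prop :=
  ∀ i, (A i).conjTranspose = A i ∧ A i * A i = A i

lemma proj_inner (A : (i : Fin n) → Matrix (X i) (X i) ℂ) (hA : ProjFam A)
    (v : ((i : Fin n) → X i) → ℂ) :
    inn v (tn A v) = (nsq (tn A v) : ℂ) := by
  rw [← inn_self]
  conv_rhs => rw [tn_adj]
  congr 1
  rw [tn_comp]
  have : (fun i => (A i).conjTranspose * A i) = A := funext fun i => by
    rw [(hA i).1, (hA i).2]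
  rw [this]

lemma tn_contraction (A : (i : Fin n) → Matrix (X i) (X i) ℂ) (hA : ProjFam A)
    (v : ((i : Fin n) → X i) → ℂ) : nsq (tn A v) ≤ nsq v := by
  have h1 : (nsq (tn A v) : ℝ) ≤ Real.sqrt (nsq v) * Real.sqrt (nsq (tn A v)) := by
    have := cs v (tn A v)
    rw [proj_inner A hA v] at this
    rw [Complex.norm_real, Real.norm_eq_abs] at this
    rwa [_root_.abs_of_nonneg (nsq_nonneg _)] at this
  by_cases h0 : nsq (tn A v) = 0
  · rw [h0]; exact nsq_nonneg v
  · have hpos : 0 < Real.sqrt (nsq (tn A v)) :=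
      Real.sqrt_pos.mpr (lt_of_le_of_ne (nsq_nonneg _) (Ne.symm h0))
    have h2 : Real.sqrt (nsq (tn A v)) ≤ Real.sqrt (nsq v) := by
      have : Real.sqrt (nsq (tn A v)) * Real.sqrt (nsq (tn A v))
          ≤ Real.sqrt (nsq v) * Real.sqrt (nsq (tn A v)) := by
        rwa [Real.mul_self_sqrt (nsq_nonneg _)]
      exact le_of_mul_le_mul_right this hpos
    calc nsq (tn A v) = Real.sqrt (nsq (tn A v)) * Real.sqrt (nsq (tn A v)) :=
          (Real.mul_self_sqrt (nsq_nonneg _)).symm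
      _ ≤ Real.sqrt (nsq v) * Real.sqrt (nsq v) := by
          exact mul_le_mul h2 h2 (Real.sqrt_nonneg _) (Real.sqrt_nonneg _)
      _ = nsq v := Real.mul_self_sqrt (nsq_nonneg _)

/-- nsq of a sum of m vectors is at most m times the sum of nsq -/
lemma normSq_sum_le' (m : ℕ) (z : Fin m → ℂ) :
    Complex.normSq (∑ k, z k) ≤ (m : ℝ) * ∑ k, Complex.normSq (z k) := by
  have h1 : ‖∑ k, z k‖ ≤ ∑ k, ‖z k‖ := norm_sum_le _ _
  have h2 : (∑ k, ‖z k‖) ^ 2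
      ≤ (∑ _k : Fin m, (1 : ℝ) ^ 2) * ∑ k, ‖z k‖ ^ 2 := by
    have := Finset.sum_mul_sq_le_sq_mul_sq Finset.univ
      (fun _ : Fin m => (1 : ℝ)) (fun k => ‖z k‖)
    simpa using this
  rw [Complex.normSq_eq_norm_sq]
  calc ‖∑ k, z k‖ ^ 2 ≤ (∑ k, ‖z k‖) ^ 2 := by
        apply pow_le_pow_left₀ (norm_nonneg _) h1
    _ ≤ (∑ _k : Fin m, (1 : ℝ) ^ 2) * ∑ k, ‖z k‖ ^ 2 := h2
    _ = (m : ℝ) * ∑ k, Complex.normSq (z k) := by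
        simp [Complex.normSq_eq_norm_sq]

lemma nsq_sum_le (m : ℕ) (u : Fin m → ((i : Fin n) → X i) → ℂ) :
    nsq (∑ k, u k) ≤ (m : ℝ) * ∑ k, nsq (u k) := by
  unfold nsq
  have hpt : ∀ x : (i : Fin n) → X i,
      Complex.normSq ((∑ k, u k) x) ≤ (m : ℝ) * ∑ k, Complex.normSq (u k x) := fun x => by
    simpa using normSq_sum_le' m (fun k => u k x)
  calc ∑ x, Complex.normSq ((∑ k, u k) x)
      ≤ ∑ x, (m : ℝ) * ∑ k, Complex.normSq (u k x) :=
        Finset.sum_le_sum fun x _ => hpt x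
    _ = (m : ℝ) * ∑ k, ∑ x, Complex.normSq (u k x) := by
        rw [← Finset.mul_sum]
        congr 1
        exact Finset.sum_comm

lemma inn_sub_right (v u w : ((i : Fin n) → X i) → ℂ) :
    inn v (u - w) = inn v u - inn v w := by
  simp only [inn, Pi.sub_apply, mul_sub, Finset.sum_sub_distrib]

lemma inn_sub_left (u w v : ((i : Fin n) → X i) → ℂ) :
    inn (u - w) v = inn u v - inn w v := by
  simp only [inn, Pi.sub_apply, map_sub, sub_mul, Finset.sum_sub_distrib]

lemma inn_smul_right (v : ((i : Fin n) → X i) → ℂ) (c : ℂ) (u : ((i : Fin n) → X i) → ℂ) :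
    inn v (c • u) = c * inn v u := by
  simp only [inn, Pi.smul_apply, smul_eq_mul, Finset.mul_sum]
  refine Finset.sum_congr rfl fun x _ => by ring

lemma inn_zero_right (v : ((i : Fin n) → X i) → ℂ) : inn v 0 = 0 := by
  simp [inn]

lemma ProjFam_one : ProjFam (fun i => (1 : Matrix (X i) (X i) ℂ)) := by
  intro i
  exact ⟨Matrix.conjTranspose_one, one_mul 1⟩

lemma ProjFam.update {A : (i : Fin n) → Matrix (X i) (X i) ℂ} (hA : ProjFam A) (i : Fin n)
    {B : Matrix (X i) (X i) ℂ} (hB1 : B.conjTranspose = B) (hB2 : B * B = B) :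
    ProjFam (Function.update A i B) := by
  intro j
  rcases eq_or_ne j i with rfl | hj
  · simpa [Function.update_self] using ⟨hB1, hB2⟩
  · simpa [Function.update_of_ne hj] using hA j

lemma conj_sandwich {m : Type} [Fintype m] [DecidableEq m] (U A B : Matrix m m ℂ)
    (h : U.conjTranspose * U = 1) :
    (U * A * U.conjTranspose) * (U * B * U.conjTranspose) = U * (A * B) * U.conjTranspose := by
  calc (U * A * U.conjTranspose) * (U * B * U.conjTranspose)
      = U * A * (U.conjTranspose * U) * B * U.conjTranspose := by
        simp only [Matrix.mul_assoc]
    _ = U * (A * B) * U.conjTranspose := by rw [h]; simp only [Matrix.mul_one, Matrix.mul_assoc]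

lemma sandwich_herm {m : Type} [Fintype m] [DecidableEq m] (U : Matrix m m ℂ) (d : m → ℂ)
    (hd : ∀ a, star (d a) = d a) :
    (U * Matrix.diagonal d * U.conjTranspose).conjTranspose
      = U * Matrix.diagonal d * U.conjTranspose := by
  have hsd : star d = d := funext hd
  have hdiag : (Matrix.diagonal d).conjTranspose = Matrix.diagonal d := by
    rw [Matrix.diagonal_conjTranspose, hsd]
  rw [Matrix.conjTranspose_mul, Matrix.conjTranspose_mul, Matrix.conjTranspose_conjTranspose,
    hdiag, Matrix.mul_assoc]

lemma single_fam_mul (i : Fin n) (A B : Matrix (X i) (X i) ℂ) :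
    (fun j => Function.update (fun j => (1 : Matrix (X j) (X j) ℂ)) i A j
      * Function.update (fun j => (1 : Matrix (X j) (X j) ℂ)) i B j)
      = Function.update (fun j => (1 : Matrix (X j) (X j) ℂ)) i (A * B) := by
  funext j
  rcases eq_or_ne j i with rfl | hj
  · simp [Function.update_self]
  · simp [Function.update_of_ne hj]

lemma single_mul (i : Fin n) (A B : Matrix (X i) (X i) ℂ) (w : ((i : Fin n) → X i) → ℂ) :
    tn (Function.update (fun j => (1 : Matrix (X j) (X j) ℂ)) i A)
      (tn (Function.update (fun j => (1 : Matrix (X j) (X j) ℂ)) i B) w)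
      = tn (Function.update (fun j => (1 : Matrix (X j) (X j) ℂ)) i (A * B)) w := by
  rw [tn_comp, single_fam_mul]

lemma single_conjTranspose (i : Fin n) (A : Matrix (X i) (X i) ℂ) :
    (fun j => (Function.update (fun j => (1 : Matrix (X j) (X j) ℂ)) i A j).conjTranspose)
      = Function.update (fun j => (1 : Matrix (X j) (X j) ℂ)) i A.conjTranspose := by
  funext j
  rcases eq_or_ne j i with rfl | hj
  · simp [Function.update_self]
  · simp [Function.update_of_ne hj]

lemma site_bound (i : Fin n) (U : Matrix (X i) (X i) ℂ) (μ : X i → ℝ) (η : ℝ) (hη0 : 0 ≤ η)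
    (hU1 : U.conjTranspose * U = 1) (hU2 : U * U.conjTranspose = 1)
    (P Pi1 : Matrix (X i) (X i) ℂ)
    (hP : P = U * Matrix.diagonal (fun a => (μ a : ℂ)) * U.conjTranspose)
    (hPi : Pi1 = U * Matrix.diagonal (fun a => if η < μ a then (1 : ℂ) else 0) * U.conjTranspose)
    (v : ((i : Fin n) → X i) → ℂ)
    (hv : tn (Function.update (fun j => (1 : Matrix (X j) (X j) ℂ)) i
      ((1 : Matrix (X i) (X i) ℂ) - Pi1)) v = v) :
    (inn v (tn (Function.update (fun j => (1 : Matrix (X j) (X j) ℂ)) i P) v)).re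
      ≤ η * nsq v := by
  set one : (j : Fin n) → Matrix (X j) (X j) ℂ := fun j => 1 with hone
  set dχ : X i → ℂ := fun a => if η < μ a then (1 : ℂ) else 0 with hdχ
  set ν : X i → ℝ := fun a => if η < μ a then 0 else μ a with hν
  have hone1 : U * Matrix.diagonal (fun _ : X i => (1 : ℂ)) * U.conjTranspose = 1 := by
    rw [Matrix.diagonal_one, Matrix.mul_one, hU2]
  have hN : (1 : Matrix (X i) (X i) ℂ) - Pi1
      = U * Matrix.diagonal (fun a => 1 - dχ a) * U.conjTranspose := by
    rw [hPi, ← hone1]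
    rw [← Matrix.sub_mul, ← Matrix.mul_sub, Matrix.diagonal_sub]
  have hK : ((1 : Matrix (X i) (X i) ℂ) - Pi1) * (P * ((1 : Matrix (X i) (X i) ℂ) - Pi1))
      = U * Matrix.diagonal (fun a => (ν a : ℂ)) * U.conjTranspose := by
    rw [hN, hP, conj_sandwich _ _ _ hU1, conj_sandwich _ _ _ hU1,
      Matrix.diagonal_mul_diagonal, Matrix.diagonal_mul_diagonal]
    refine congrArg (fun D => U * Matrix.diagonal D * U.conjTranspose) ?_
    funext a
    by_cases h : η < μ a <;> simp [hdχ, hν, h]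
  set K : Matrix (X i) (X i) ℂ := U * Matrix.diagonal (fun a => (ν a : ℂ)) * U.conjTranspose
    with hKdef
  have hνle : ∀ a, ν a ≤ η := by
    intro a
    by_cases h : η < μ a
    · simpa [hν, h] using hη0
    · simpa [hν, h] using le_of_not_gt h
  have hNherm : ((1 : Matrix (X i) (X i) ℂ) - Pi1).conjTranspose
      = (1 : Matrix (X i) (X i) ℂ) - Pi1 := by
    rw [hN]
    apply sandwich_herm
    intro a
    by_cases h : η < μ a <;> simp [hdχ, h]
  -- rewrite the inner product using K
  have hz : inn v (tn (Function.update one i P) v)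
      = inn v (tn (Function.update one i K) v) := by
    have step1 : tn (Function.update one i P) v
        = tn (Function.update one i (P * ((1 : Matrix (X i) (X i) ℂ) - Pi1))) v := by
      conv_lhs => rw [← hv]
      rw [single_mul]
    have step2 : inn v (tn (Function.update one i
          (P * ((1 : Matrix (X i) (X i) ℂ) - Pi1))) v)
        = inn (tn (Function.update one i ((1 : Matrix (X i) (X i) ℂ) - Pi1)) v)
            (tn (Function.update one i (P * ((1 : Matrix (X i) (X i) ℂ) - Pi1))) v) := by
      rw [hv]
    rw [step1, step2, tn_adj, single_conjTranspose, hNherm, single_mul, hK]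
  rw [hz]
  -- construct the square root
  set s : X i → ℂ := fun a => ((Real.sqrt (η - ν a) : ℝ) : ℂ) with hs
  set W : Matrix (X i) (X i) ℂ := Matrix.diagonal s * U.conjTranspose with hW
  have hWW : W.conjTranspose * W
      = U * Matrix.diagonal (fun a => ((η - ν a : ℝ) : ℂ)) * U.conjTranspose := by
    have hss : star s = s := funext fun a => by simp [hs, Complex.conj_ofReal]
    rw [hW, Matrix.conjTranspose_mul, Matrix.conjTranspose_conjTranspose,
      Matrix.diagonal_conjTranspose, hss]
    calc U * Matrix.diagonal s * (Matrix.diagonal s * U.conjTranspose)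
        = U * (Matrix.diagonal s * Matrix.diagonal s) * U.conjTranspose := by
          simp only [Matrix.mul_assoc]
      _ = U * Matrix.diagonal (fun a => ((η - ν a : ℝ) : ℂ)) * U.conjTranspose := by
          rw [Matrix.diagonal_mul_diagonal]
          refine congrArg (fun D => U * Matrix.diagonal D * U.conjTranspose) ?_
          funext a
          rw [hs]
          rw [← Complex.ofReal_mul, Real.mul_self_sqrt (by linarith [hνle a])]
  have hηK : (η : ℂ) • (1 : Matrix (X i) (X i) ℂ) - K = W.conjTranspose * W := by
    rw [hWW, hKdef]
    have h1 : (η : ℂ) • (1 : Matrix (X i) (X i) ℂ)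
        = U * Matrix.diagonal (fun _ : X i => (η : ℂ)) * U.conjTranspose := by
      rw [← Matrix.smul_one_eq_diagonal, Matrix.mul_smul, Matrix.smul_mul,
        Matrix.mul_one, hU2]
    rw [h1, ← Matrix.sub_mul, ← Matrix.mul_sub, Matrix.diagonal_sub]
    refine congrArg (fun D => U * Matrix.diagonal D * U.conjTranspose) ?_
    funext a
    push_cast
    ring
  have e1 : tn (Function.update one i ((η : ℂ) • (1 : Matrix (X i) (X i) ℂ) - K)) v
      = (η : ℂ) • v - tn (Function.update one i K) v := by
    have h2 := tn_update_add one i ((η : ℂ) • (1 : Matrix (X i) (X i) ℂ) - K) K v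
    rw [sub_add_cancel] at h2
    have e2 : tn (Function.update one i ((η : ℂ) • (1 : Matrix (X i) (X i) ℂ))) v
        = (η : ℂ) • v := by
      rw [tn_update_smul]
      rw [show Function.update one i (1 : Matrix (X i) (X i) ℂ) = one from
        Function.update_eq_self i one]
      rw [tn_one]
    rw [e2] at h2
    exact eq_sub_of_add_eq h2.symm
  have e3 : inn (tn (Function.update one i W) v) (tn (Function.update one i W) v)
      = inn v (tn (Function.update one i (W.conjTranspose * W)) v) := by
    rw [tn_adj, single_conjTranspose, single_mul]
  have key : ((η * nsq v : ℝ) : ℂ) - inn v (tn (Function.update one i K) v)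
      = (nsq (tn (Function.update one i W) v) : ℂ) := by
    calc ((η * nsq v : ℝ) : ℂ) - inn v (tn (Function.update one i K) v)
        = inn v ((η : ℂ) • v - tn (Function.update one i K) v) := by
          rw [inn_sub_right, inn_smul_right, inn_self]
          push_cast
          ring
      _ = inn v (tn (Function.update one i ((η : ℂ) • (1 : Matrix (X i) (X i) ℂ) - K)) v) := by
          rw [e1]
      _ = inn v (tn (Function.update one i (W.conjTranspose * W)) v) := by rw [hηK]
      _ = (nsq (tn (Function.update one i W) v) : ℂ) := by rw [← e3, inn_self]
  have hre := congrArg Complex.re key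
  rw [Complex.sub_re, Complex.ofReal_re, Complex.ofReal_re] at hre
  have := nsq_nonneg (tn (Function.update one i W) v)
  linarith

end Aux

/-- Let `M_r^{(i)}` be orthogonal projections, `P^{(i)} = (1/|R|)Σ_r M_r^{(i)}`,
`η ∈ [0,1]`, and `Π^{(i)}` the orthogonal projection onto the sum of eigenspaces of `P^{(i)}`
with eigenvalues strictly greater than `η`. Then for every unit vector `ψ`:
`(1/|R|)·Σ_r ‖(M_r^{(1)} ⊗ ⋯ ⊗ M_r^{(n)})ψ‖² ≤ (n+1)·(η + ‖(Π^{(1)} ⊗ ⋯ ⊗ Π^{(n)})ψ‖²)`. -/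
theorem stmt8 {n : ℕ} (hn : 1 ≤ n) (X : Fin n → Type)
    [∀ i, Fintype (X i)] [∀ i, DecidableEq (X i)] [∀ i, Nonempty (X i)]
    {R : Type} [Fintype R] [Nonempty R]
    (M : R → (i : Fin n) → Matrix (X i) (X i) ℂ)
    (hMherm : ∀ r i, (M r i).IsHermitian)
    (hMidem : ∀ r i, M r i * M r i = M r i)
    (Pm : (i : Fin n) → Matrix (X i) (X i) ℂ)
    (hPm : ∀ i, Pm i = ((Fintype.card R : ℂ))⁻¹ • ∑ r : R, M r i)
    (η : ℝ) (hη0 : 0 ≤ η) (hη1 : η ≤ 1)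
    (Pj : (i : Fin n) → Matrix (X i) (X i) ℂ)
    (hPj : ∀ i, ∃ (U : Matrix (X i) (X i) ℂ) (μ : X i → ℝ),
      U ∈ Matrix.unitaryGroup (X i) ℂ ∧
      Pm i = U * Matrix.diagonal (fun a => (μ a : ℂ)) * U.conjTranspose ∧
      Pj i = U * Matrix.diagonal (fun a => if η < μ a then (1 : ℂ) else 0) * U.conjTranspose)
    (tens : ((i : Fin n) → Matrix (X i) (X i) ℂ) →
      (((i : Fin n) → X i) → ℂ) → (((i : Fin n) → X i) → ℂ))
    (htens : ∀ A v xx, tens A v xx =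
      ∑ yy : (i : Fin n) → X i, (∏ i, A i (xx i) (yy i)) * v yy)
    (ψ : ((i : Fin n) → X i) → ℂ)
    (hψ : ∑ xx, Complex.normSq (ψ xx) = 1) :
    (∑ r : R, ∑ xx, Complex.normSq (tens (M r) ψ xx)) / (Fintype.card R : ℝ)
      ≤ ((n : ℝ) + 1) * (η + ∑ xx, Complex.normSq (tens Pj ψ xx)) := by
  classical
  set cardR : ℝ := (Fintype.card R : ℝ) with hcardR
  have hcpos : 0 < cardR := by
    have := Fintype.card_pos (α := R)
    simp only [hcardR]
    exact_mod_cast this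
  have hcne : (Fintype.card R : ℂ) ≠ 0 := Nat.cast_ne_zero.mpr Fintype.card_ne_zero
  -- replace tens by tn
  have keyA : ∀ A : (i : Fin n) → Matrix (X i) (X i) ℂ,
      (∑ xx, Complex.normSq (tens A ψ xx)) = nsq (tn A ψ) := by
    intro A
    unfold nsq
    exact Finset.sum_congr rfl fun xx _ => by rw [htens]; rfl
  rw [show (∑ r : R, ∑ xx, Complex.normSq (tens (M r) ψ xx))
      = ∑ r : R, nsq (tn (M r) ψ) from Finset.sum_congr rfl fun r _ => keyA (M r), keyA Pj]
  -- Pj is a family of Hermitian idempotents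
  have hPjprop : ∀ i, (Pj i).conjTranspose = Pj i ∧ Pj i * Pj i = Pj i := by
    intro i
    obtain ⟨U, μ, hU, hPmU, hPjU⟩ := hPj i
    have hU2 : U * U.conjTranspose = 1 := by
      have := (Matrix.mem_unitaryGroup_iff).mp hU
      rwa [Matrix.star_eq_conjTranspose] at this
    have hU1 : U.conjTranspose * U = 1 := by
      have := (Matrix.mem_unitaryGroup_iff').mp hU
      rwa [Matrix.star_eq_conjTranspose] at this
    constructor
    · rw [hPjU]
      apply sandwich_herm
      intro a
      by_cases h : η < μ a <;> simp [h]
    · rw [hPjU, conj_sandwich _ _ _ hU1, Matrix.diagonal_mul_diagonal]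
      refine congrArg (fun D => U * Matrix.diagonal D * U.conjTranspose) ?_
      funext a
      by_cases h : η < μ a <;> simp [h]
  have sub_herm : ∀ i, ((1 : Matrix (X i) (X i) ℂ) - Pj i).conjTranspose = 1 - Pj i := by
    intro i
    rw [Matrix.conjTranspose_sub, Matrix.conjTranspose_one, (hPjprop i).1]
  have sub_idem : ∀ i, ((1 : Matrix (X i) (X i) ℂ) - Pj i) * (1 - Pj i) = 1 - Pj i := by
    intro i
    have h := (hPjprop i).2
    calc ((1 : Matrix (X i) (X i) ℂ) - Pj i) * (1 - Pj i)
        = 1 - Pj i - Pj i + Pj i * Pj i := by noncomm_ring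
      _ = 1 - Pj i := by rw [h]; abel
  have PF_M : ∀ r, ProjFam (M r) := fun r i => ⟨(hMherm r i).eq, hMidem r i⟩
  have PF_Pj : ProjFam Pj := fun i => hPjprop i
  -- the families
  set Tq : ℕ → ((j : Fin n) → Matrix (X j) (X j) ℂ) :=
    fun k j => if (j : ℕ) < k then Pj j else 1 with hTq
  set Qf : Fin n → ((j : Fin n) → Matrix (X j) (X j) ℂ) :=
    fun i j => if (j : ℕ) < (i : ℕ) then Pj j
      else if (j : ℕ) = (i : ℕ) then 1 - Pj j else 1 with hQf
  have PF_Q : ∀ i, ProjFam (Qf i) := by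
    intro i j
    simp only [hQf]
    by_cases h1 : (j : ℕ) < (i : ℕ)
    · simp only [if_pos h1]
      exact ⟨(hPjprop j).1, (hPjprop j).2⟩
    · by_cases h2 : (j : ℕ) = (i : ℕ)
      · simp only [if_neg h1, if_pos h2]
        exact ⟨sub_herm j, sub_idem j⟩
      · simp only [if_neg h1, if_neg h2]
        exact ⟨Matrix.conjTranspose_one, one_mul 1⟩
  -- telescoping decomposition
  have tele : ∀ k : ℕ, k ≤ n →
      tn (Tq k) ψ = ψ - ∑ i ∈ Finset.univ.filter (fun i : Fin n => (i : ℕ) < k),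
        tn (Qf i) ψ := by
    intro k
    induction k with
    | zero =>
      intro _
      have h0 : Tq 0 = fun j => (1 : Matrix (X j) (X j) ℂ) := by
        funext j
        simp [hTq]
      have hf : Finset.univ.filter (fun i : Fin n => (i : ℕ) < 0) = ∅ := by
        ext i
        simp
      rw [h0, tn_one, hf, Finset.sum_empty, sub_zero]
    | succ k ih =>
      intro hk1
      have hk : k < n := hk1
      set i0 : Fin n := ⟨k, hk⟩ with hi0
      have hupd1 : Tq k = Function.update (Tq (k + 1)) i0 (1 : Matrix (X i0) (X i0) ℂ) := by
        funext j
        rcases eq_or_ne j i0 with rfl | hj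
        · rw [Function.update_self]
          simp [hTq, hi0]
        · rw [Function.update_of_ne hj]
          have hvne : (j : ℕ) ≠ k := fun h => hj (Fin.ext h)
          simp only [hTq]
          exact if_congr (by omega) rfl rfl
      have hupd2 : Qf i0 = Function.update (Tq (k + 1)) i0
          ((1 : Matrix (X i0) (X i0) ℂ) - Pj i0) := by
        funext j
        rcases eq_or_ne j i0 with rfl | hj
        · rw [Function.update_self]
          simp [hQf]
        · rw [Function.update_of_ne hj]
          have hvne : (j : ℕ) ≠ k := fun h => hj (Fin.ext h)
          simp only [hQf, hTq]
          by_cases h : (j : ℕ) < k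
          · simp [h, hi0, show (j : ℕ) < k + 1 by omega]
          · simp [h, hi0, hvne, show ¬((j : ℕ) < k + 1) by omega]
      have hupd3 : Tq (k + 1) = Function.update (Tq (k + 1)) i0 (Pj i0) := by
        funext j
        rcases eq_or_ne j i0 with rfl | hj
        · rw [Function.update_self]
          simp [hTq, hi0]
        · rw [Function.update_of_ne hj]
      have hsplit : tn (Tq k) ψ = tn (Tq (k + 1)) ψ + tn (Qf i0) ψ := by
        have hadd := tn_update_add (Tq (k + 1)) i0 (Pj i0)
          ((1 : Matrix (X i0) (X i0) ℂ) - Pj i0) ψ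
        have hP1 : Pj i0 + ((1 : Matrix (X i0) (X i0) ℂ) - Pj i0) = 1 := by abel
        rw [hP1] at hadd
        rw [hupd1, hupd2, hadd, ← hupd3]
      have hfilter : Finset.univ.filter (fun i : Fin n => (i : ℕ) < k + 1)
          = insert i0 (Finset.univ.filter (fun i : Fin n => (i : ℕ) < k)) := by
        ext j
        simp only [Finset.mem_insert, Finset.mem_filter, Finset.mem_univ, true_and]
        constructor
        · intro h
          rcases eq_or_ne (j : ℕ) k with he | hne
          · left
            exact Fin.ext he
          · right
            omega
        · rintro (rfl | h)
          · exact Nat.lt_succ_self k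
          · omega
      have hnotmem : i0 ∉ Finset.univ.filter (fun i : Fin n => (i : ℕ) < k) := by
        simp [hi0]
      rw [hfilter, Finset.sum_insert hnotmem]
      have hthis := hsplit
      rw [ih (Nat.le_of_succ_le hk1)] at hthis
      have : tn (Tq (k + 1)) ψ
          = (ψ - ∑ i ∈ Finset.univ.filter (fun i : Fin n => (i : ℕ) < k), tn (Qf i) ψ)
            - tn (Qf i0) ψ := eq_sub_of_add_eq hthis.symm
      rw [this]
      abel
  have hTn : Tq n = Pj := by
    funext j
    simp [hTq, j.isLt]
  have hdecomp : ψ = tn Pj ψ + ∑ i : Fin n, tn (Qf i) ψ := by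
    have h := tele n le_rfl
    rw [hTn] at h
    have hfall : Finset.univ.filter (fun i : Fin n => (i : ℕ) < n) = Finset.univ :=
      Finset.filter_true_of_mem fun i _ => i.isLt
    rw [hfall] at h
    rw [h]
    abel
  -- orthogonality of the Q pieces
  have horth : ∀ i j : Fin n, i ≠ j → inn (tn (Qf i) ψ) (tn (Qf j) ψ) = 0 := by
    intro i j hij
    rw [tn_adj]
    have hconj : (fun k => (Qf i k).conjTranspose) = Qf i := funext fun k => ((PF_Q i) k).1
    rw [hconj, tn_comp]
    rcases lt_or_gt_of_ne hij with hlt | hgt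
    · have hz : (fun k => Qf i k * Qf j k) i = 0 := by
        simp only [hQf]
        simp [show (i : ℕ) < (j : ℕ) from hlt, Matrix.sub_mul, (hPjprop i).2]
      rw [tn_zero _ i hz, inn_zero_right]
    · have hz : (fun k => Qf i k * Qf j k) j = 0 := by
        simp only [hQf]
        simp [show (j : ℕ) < (i : ℕ) from hgt, Matrix.mul_sub, (hPjprop j).2]
      rw [tn_zero _ j hz, inn_zero_right]
  have hψ1 : nsq ψ = 1 := hψ
  -- the total mass of the Q pieces is at most 1
  have hsumQ : ∑ i : Fin n, nsq (tn (Qf i) ψ) ≤ 1 := by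
    have hsum_eq : ((∑ i : Fin n, nsq (tn (Qf i) ψ) : ℝ) : ℂ)
        = inn (∑ i : Fin n, tn (Qf i) ψ) (∑ j : Fin n, tn (Qf j) ψ) := by
      rw [inn_sum_left]
      push_cast
      refine Finset.sum_congr rfl fun i _ => ?_
      rw [inn_sum_right, Finset.sum_eq_single i]
      · rw [inn_self]
      · intro b _ hbi
        exact horth i b (Ne.symm hbi)
      · intro h
        exact absurd (Finset.mem_univ i) h
    have hsub : (∑ i : Fin n, tn (Qf i) ψ) = ψ - tn Pj ψ := by
      have := hdecomp.symm
      rw [add_comm] at this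
      exact eq_sub_of_add_eq this
    have h2 : inn ψ (tn Pj ψ) = ((nsq (tn Pj ψ) : ℝ) : ℂ) := proj_inner Pj PF_Pj ψ
    have h3 : inn (tn Pj ψ) ψ = ((nsq (tn Pj ψ) : ℝ) : ℂ) := by
      rw [← inn_conj ψ (tn Pj ψ), h2, Complex.conj_ofReal]
    have hnormsub : ((∑ i : Fin n, nsq (tn (Qf i) ψ) : ℝ) : ℂ)
        = ((nsq ψ - nsq (tn Pj ψ) : ℝ) : ℂ) := by
      rw [hsum_eq, hsub, inn_sub_left, inn_sub_right, inn_sub_right,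
        inn_self ψ, inn_self (tn Pj ψ), h2, h3]
      push_cast
      ring
    have hre : ∑ i : Fin n, nsq (tn (Qf i) ψ) = nsq ψ - nsq (tn Pj ψ) :=
      Complex.ofReal_inj.mp hnormsub
    have := nsq_nonneg (tn Pj ψ)
    rw [hre, hψ1]
    linarith
  -- the key per-site estimate
  have hcore : ∀ i : Fin n, ∑ r : R, nsq (tn (M r) (tn (Qf i) ψ))
      ≤ cardR * (η * nsq (tn (Qf i) ψ)) := by
    intro i
    set v := tn (Qf i) ψ with hvdef
    obtain ⟨U, μ, hU, hPmU, hPjU⟩ := hPj i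
    have hU2 : U * U.conjTranspose = 1 := by
      have := (Matrix.mem_unitaryGroup_iff).mp hU
      rwa [Matrix.star_eq_conjTranspose] at this
    have hU1 : U.conjTranspose * U = 1 := by
      have := (Matrix.mem_unitaryGroup_iff').mp hU
      rwa [Matrix.star_eq_conjTranspose] at this
    have hinv : tn (Function.update (fun j => (1 : Matrix (X j) (X j) ℂ)) i
        ((1 : Matrix (X i) (X i) ℂ) - Pj i)) v = v := by
      have hfam : (fun j => Function.update (fun j => (1 : Matrix (X j) (X j) ℂ)) i
          ((1 : Matrix (X i) (X i) ℂ) - Pj i) j * Qf i j) = Qf i := by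
        funext j
        rcases eq_or_ne j i with rfl | hj
        · rw [Function.update_self]
          have hQjj : Qf j j = 1 - Pj j := by
            simp [hQf]
          rw [hQjj, sub_idem j]
        · rw [Function.update_of_ne hj, Matrix.one_mul]
      rw [hvdef, tn_comp, hfam]
    have hstep1 : ∀ r, nsq (tn (M r) v)
        ≤ nsq (tn (Function.update (fun j => (1 : Matrix (X j) (X j) ℂ)) i (M r i)) v) := by
      intro r
      have hfact : tn (Function.update (M r) i (1 : Matrix (X i) (X i) ℂ))
          (tn (Function.update (fun j => (1 : Matrix (X j) (X j) ℂ)) i (M r i)) v)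
          = tn (M r) v := by
        have hfam2 : (fun j => Function.update (M r) i (1 : Matrix (X i) (X i) ℂ) j
            * Function.update (fun j => (1 : Matrix (X j) (X j) ℂ)) i (M r i) j) = M r := by
          funext j
          rcases eq_or_ne j i with rfl | hj
          · rw [Function.update_self, Function.update_self, Matrix.one_mul]
          · rw [Function.update_of_ne hj, Function.update_of_ne hj, Matrix.mul_one]
        rw [tn_comp, hfam2]
      rw [← hfact]
      exact tn_contraction _ ((PF_M r).update i Matrix.conjTranspose_one (one_mul 1)) _
    have hstep2 : ∀ r,
        nsq (tn (Function.update (fun j => (1 : Matrix (X j) (X j) ℂ)) i (M r i)) v)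
        = (inn v (tn (Function.update (fun j => (1 : Matrix (X j) (X j) ℂ)) i (M r i)) v)).re := by
      intro r
      rw [proj_inner _ (ProjFam_one.update i (hMherm r i).eq (hMidem r i)) v,
        Complex.ofReal_re]
    have hsumM : ∑ r : R, M r i = (Fintype.card R : ℂ) • Pm i := by
      rw [hPm i, smul_smul, mul_inv_cancel₀ hcne, one_smul]
    have hstep3 : ∑ r : R,
        inn v (tn (Function.update (fun j => (1 : Matrix (X j) (X j) ℂ)) i (M r i)) v)
        = (Fintype.card R : ℂ)
          * inn v (tn (Function.update (fun j => (1 : Matrix (X j) (X j) ℂ)) i (Pm i)) v) := by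
      calc ∑ r : R,
          inn v (tn (Function.update (fun j => (1 : Matrix (X j) (X j) ℂ)) i (M r i)) v)
          = inn v (∑ r : R,
            tn (Function.update (fun j => (1 : Matrix (X j) (X j) ℂ)) i (M r i)) v) :=
            (inn_sum_right _ _ _).symm
        _ = inn v (tn (Function.update (fun j => (1 : Matrix (X j) (X j) ℂ)) i
              (∑ r : R, M r i)) v) := by rw [tn_update_sum]
        _ = inn v (tn (Function.update (fun j => (1 : Matrix (X j) (X j) ℂ)) i
              ((Fintype.card R : ℂ) • Pm i)) v) := by rw [hsumM]
        _ = (Fintype.card R : ℂ)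
              * inn v (tn (Function.update (fun j => (1 : Matrix (X j) (X j) ℂ)) i (Pm i)) v) := by
            rw [tn_update_smul, inn_smul_right]
    have hsite := site_bound i U μ η hη0 hU1 hU2 (Pm i) (Pj i) hPmU hPjU v hinv
    have hcast : ((Fintype.card R : ℝ) : ℂ) = (Fintype.card R : ℂ) := by push_cast; ring
    calc ∑ r : R, nsq (tn (M r) v)
        ≤ ∑ r : R, (inn v (tn (Function.update
            (fun j => (1 : Matrix (X j) (X j) ℂ)) i (M r i)) v)).re := by
          refine Finset.sum_le_sum fun r _ => ?_
          rw [← hstep2 r]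
          exact hstep1 r
      _ = (∑ r : R, inn v (tn (Function.update
            (fun j => (1 : Matrix (X j) (X j) ℂ)) i (M r i)) v)).re := by
          rw [Complex.re_sum]
      _ = ((Fintype.card R : ℂ) * inn v (tn (Function.update
            (fun j => (1 : Matrix (X j) (X j) ℂ)) i (Pm i)) v)).re := by rw [hstep3]
      _ = cardR * (inn v (tn (Function.update
            (fun j => (1 : Matrix (X j) (X j) ℂ)) i (Pm i)) v)).re := by
          rw [← hcast, Complex.re_ofReal_mul, hcardR]
      _ ≤ cardR * (η * nsq v) := mul_le_mul_of_nonneg_left hsite hcpos.le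
  -- assemble everything
  rw [div_le_iff₀ hcpos]
  have hn1 : (0 : ℝ) ≤ (n : ℝ) + 1 := by positivity
  calc ∑ r : R, nsq (tn (M r) ψ)
      ≤ ∑ r : R, ((n : ℝ) + 1)
          * (nsq (tn (M r) (tn Pj ψ)) + ∑ i : Fin n, nsq (tn (M r) (tn (Qf i) ψ))) := by
        refine Finset.sum_le_sum fun r _ => ?_
        have hsplit : tn (M r) ψ
            = tn (M r) (tn Pj ψ) + ∑ i : Fin n, tn (M r) (tn (Qf i) ψ) := by
          conv_lhs => rw [hdecomp]
          rw [tn_add_v, tn_sum_v]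
        rw [hsplit]
        set w : Fin (n + 1) → ((i : Fin n) → X i) → ℂ :=
          Fin.cons (tn (M r) (tn Pj ψ)) (fun i => tn (M r) (tn (Qf i) ψ)) with hw
        have h1 : tn (M r) (tn Pj ψ) + ∑ i : Fin n, tn (M r) (tn (Qf i) ψ)
            = ∑ k, w k := by
          rw [Fin.sum_univ_succ]
          simp [hw]
        have h2 : nsq (tn (M r) (tn Pj ψ)) + ∑ i : Fin n, nsq (tn (M r) (tn (Qf i) ψ))
            = ∑ k, nsq (w k) := by
          rw [Fin.sum_univ_succ]
          simp [hw]
        rw [h1, h2]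
        have h3 := nsq_sum_le (n + 1) w
        push_cast at h3 ⊢
        exact h3
    _ = ((n : ℝ) + 1) * ∑ r : R,
          (nsq (tn (M r) (tn Pj ψ)) + ∑ i : Fin n, nsq (tn (M r) (tn (Qf i) ψ))) := by
        rw [Finset.mul_sum]
    _ ≤ ((n : ℝ) + 1) * (cardR * nsq (tn Pj ψ) + cardR * (η * 1)) := by
        refine mul_le_mul_of_nonneg_left ?_ hn1
        rw [Finset.sum_add_distrib]
        have hA : ∑ r : R, nsq (tn (M r) (tn Pj ψ)) ≤ cardR * nsq (tn Pj ψ) := by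
          calc ∑ r : R, nsq (tn (M r) (tn Pj ψ)) ≤ ∑ _r : R, nsq (tn Pj ψ) :=
                Finset.sum_le_sum fun r _ => tn_contraction _ (PF_M r) _
            _ = cardR * nsq (tn Pj ψ) := by
                rw [Finset.sum_const, nsmul_eq_mul, hcardR, Finset.card_univ]
        have hB : ∑ r : R, ∑ i : Fin n, nsq (tn (M r) (tn (Qf i) ψ)) ≤ cardR * (η * 1) := by
          rw [Finset.sum_comm]
          calc ∑ i : Fin n, ∑ r : R, nsq (tn (M r) (tn (Qf i) ψ))
              ≤ ∑ i : Fin n, cardR * (η * nsq (tn (Qf i) ψ)) :=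
                Finset.sum_le_sum fun i _ => hcore i
            _ = cardR * η * ∑ i : Fin n, nsq (tn (Qf i) ψ) := by
                rw [Finset.mul_sum]
                refine Finset.sum_congr rfl fun i _ => by ring
            _ ≤ cardR * η * 1 :=
                mul_le_mul_of_nonneg_left hsumQ (mul_nonneg hcpos.le hη0)
            _ = cardR * (η * 1) := by ring
        exact add_le_add hA hB
    _ = ((n : ℝ) + 1) * (η + nsq (tn Pj ψ)) * cardR := by ring
end

section
/- Let R be a nonempty finite set, and for each r ∈ R and each i ∈ {1,…,n} let M_r^{(i)} ∈ M_{X_i}(ℂ) be an orthogonal projection. Set P^{(i)} = (1/|R|)·Σ_{r∈R} M_r^{(i)}, let η ∈ [0,1], and let Π^{(i)} be the orthogonal projection onto the sum of the eigenspaces of P^{(i)} corresponding to eigenvalues strictly greater than η. Then for every Hermitian positive semidefinite matrix ρ on ℂ^{X_1×⋯×X_n} with trace 1: (1/|R|)·Σ_{r∈R} Tr[ (M_r^{(1)} ⊗ ⋯ ⊗ M_r^{(n)}) ρ (M_r^{(1)} ⊗ ⋯ ⊗ M_r^{(n)}) ] ≤ (n+1)·( η + Tr[ (Π^{(1)} ⊗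 ⋯ ⊗ Π^{(n)}) ρ ] ). -/
open scoped ComplexOrder

namespace Stmt9Aux
open scoped Matrix
set_option linter.unusedSectionVars false

section general
variable {K : Type} [Fintype K] [DecidableEq K]

lemma psd_factor {A : Matrix K K ℂ} (hA : A.PosSemidef) : ∃ C : Matrix K K ℂ, A = Cᴴ * C := by
  open scoped MatrixOrder Matrix.Norms.L2Operator in
  obtain ⟨B, hB⟩ := CStarAlgebra.nonneg_iff_eq_star_mul_self.mp hA.nonneg
  exact ⟨B, hB⟩

lemma psd_trace_nonneg {A : Matrix K K ℂ} (hA : A.PosSemidef) : 0 ≤ A.trace := by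
  rw [Matrix.trace]
  refine Finset.sum_nonneg fun i _ => ?_
  have := hA.dotProduct_mulVec_nonneg (Pi.single i 1)
  simpa [dotProduct, Matrix.mulVec, Pi.single_apply, Matrix.diag] using this

lemma psd_trace_mul {A B : Matrix K K ℂ} (hA : A.PosSemidef) (hB : B.PosSemidef) :
    0 ≤ (A * B).trace := by
  obtain ⟨C, rfl⟩ := psd_factor hA
  rw [Matrix.trace_mul_cycle, Matrix.trace_mul_cycle]
  exact psd_trace_nonneg (hB.mul_mul_conjTranspose_same C)

lemma psd_smul {c : ℂ} (hc : 0 ≤ c) {A : Matrix K K ℂ} (hA : A.PosSemidef) :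
    (c • A).PosSemidef := by
  have hcr : star c = c := by
    rw [Complex.star_def, Complex.conj_eq_iff_im]
    exact ((Complex.le_def.mp hc).2).symm
  refine Matrix.PosSemidef.of_dotProduct_mulVec_nonneg ?_ ?_
  · rw [Matrix.IsHermitian, Matrix.conjTranspose_smul, hcr, hA.1]
  · intro x
    rw [Matrix.smul_mulVec, dotProduct_smul]
    exact mul_nonneg hc (hA.dotProduct_mulVec_nonneg x)

lemma psd_sum {ι : Type*} (s : Finset ι) (f : ι → Matrix K K ℂ)
    (h : ∀ i ∈ s, (f i).PosSemidef) : (∑ i ∈ s, f i).PosSemidef := by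
  classical
  induction s using Finset.induction_on with
  | empty => simpa using Matrix.PosSemidef.zero
  | insert a s hni ih =>
    rw [Finset.sum_insert hni]
    exact Matrix.PosSemidef.add (h _ (Finset.mem_insert_self _ _))
      (ih fun i hi => h i (Finset.mem_insert_of_mem hi))

lemma proj_psd {A : Matrix K K ℂ} (hH : Aᴴ = A) (hI : A * A = A) : A.PosSemidef := by
  have h : A = Aᴴ * A := by rw [hH, hI]
  rw [h]
  exact Matrix.posSemidef_conjTranspose_mul_self A

lemma sum_dot {ι : Type*} (s : Finset ι) (f : ι → K → ℂ) (w : K → ℂ) :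
    (∑ i ∈ s, f i) ⬝ᵥ w = ∑ i ∈ s, f i ⬝ᵥ w := by
  simp only [dotProduct, Finset.sum_apply, Finset.sum_mul]
  rw [Finset.sum_comm]

lemma dot_sum {ι : Type*} (s : Finset ι) (w : K → ℂ) (f : ι → K → ℂ) :
    w ⬝ᵥ (∑ i ∈ s, f i) = ∑ i ∈ s, w ⬝ᵥ f i := by
  simp only [dotProduct, Finset.sum_apply, Finset.mul_sum]
  rw [Finset.sum_comm]

lemma sum_mulVec' {ι : Type*} (s : Finset ι) (A : ι → Matrix K K ℂ) (x : K → ℂ) :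
    (∑ i ∈ s, A i) *ᵥ x = ∑ i ∈ s, (A i *ᵥ x) := by
  ext k
  simp only [Matrix.mulVec, dotProduct, Finset.sum_apply, Matrix.sum_apply,
    Finset.sum_mul]
  rw [Finset.sum_comm]

lemma form_conj (C : Matrix K K ℂ) (x : K → ℂ) :
    star x ⬝ᵥ ((Cᴴ * C) *ᵥ x) = star (C *ᵥ x) ⬝ᵥ (C *ᵥ x) := by
  rw [← Matrix.mulVec_mulVec, Matrix.dotProduct_mulVec, ← Matrix.star_mulVec]

lemma pair_dot (a b : K → ℂ) :
    star a ⬝ᵥ b + star b ⬝ᵥ a ≤ star a ⬝ᵥ a + star b ⬝ᵥ b := by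
  have h := dotProduct_star_self_nonneg (a - b)
  rw [star_sub, sub_dotProduct, dotProduct_sub, dotProduct_sub] at h
  rw [← sub_nonneg]
  calc (0:ℂ) ≤ _ := h
  _ = star a ⬝ᵥ a + star b ⬝ᵥ b - (star a ⬝ᵥ b + star b ⬝ᵥ a) := by ring

lemma sum_dot_cs {ι : Type*} (s : Finset ι) (v : ι → K → ℂ) :
    star (∑ i ∈ s, v i) ⬝ᵥ (∑ i ∈ s, v i)
      ≤ (s.card : ℂ) * ∑ i ∈ s, star (v i) ⬝ᵥ v i := by
  classical
  rw [star_sum, sum_dot]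
  simp_rw [dot_sum]
  calc ∑ j ∈ s, ∑ i ∈ s, star (v j) ⬝ᵥ v i
      = (2⁻¹ : ℂ) * ∑ j ∈ s, ∑ i ∈ s, (star (v j) ⬝ᵥ v i + star (v i) ⬝ᵥ v j) := by
        simp only [Finset.sum_add_distrib]
        rw [Finset.sum_comm (f := fun j i => star (v i) ⬝ᵥ v j)]
        ring
    _ ≤ (2⁻¹ : ℂ) * ∑ j ∈ s, ∑ i ∈ s, (star (v j) ⬝ᵥ v j + star (v i) ⬝ᵥ v i) := by
        have h2 : (0:ℂ) ≤ 2⁻¹ := by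
          rw [show ((2:ℂ))⁻¹ = (((2:ℝ))⁻¹ : ℝ) by norm_num]
          exact Complex.zero_le_real.mpr (by norm_num)
        refine mul_le_mul_of_nonneg_left ?_ h2
        exact Finset.sum_le_sum fun j _ => Finset.sum_le_sum fun i _ => pair_dot _ _
    _ = (s.card : ℂ) * ∑ i ∈ s, star (v i) ⬝ᵥ v i := by
        simp only [Finset.sum_add_distrib, Finset.sum_const, nsmul_eq_mul, Finset.mul_sum,
          ← Finset.sum_mul]
        ring

lemma sum_cs_matrix {ι : Type*} (s : Finset ι) {S : Matrix K K ℂ} (hS : S.PosSemidef)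
    (B : ι → Matrix K K ℂ) :
    ((s.card : ℂ) • (∑ i ∈ s, (B i)ᴴ * S * (B i))
      - (∑ i ∈ s, B i)ᴴ * S * (∑ i ∈ s, B i)).PosSemidef := by
  obtain ⟨T, rfl⟩ := psd_factor hS
  have hre : ∀ (C : Matrix K K ℂ), Cᴴ * (Tᴴ * T) * C = (T * C)ᴴ * (T * C) := by
    intro C
    rw [Matrix.conjTranspose_mul]
    noncomm_ring
  refine Matrix.PosSemidef.of_dotProduct_mulVec_nonneg ?_ ?_
  · have h1 : (∑ i ∈ s, (B i)ᴴ * (Tᴴ * T) * B i)ᴴ = ∑ i ∈ s, (B i)ᴴ * (Tᴴ * T) * B i := by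
      rw [Matrix.conjTranspose_sum]
      exact Finset.sum_congr rfl fun i _ =>
        (Matrix.isHermitian_conjTranspose_mul_mul _ (Matrix.isHermitian_conjTranspose_mul_self T))
    have h2 := Matrix.isHermitian_conjTranspose_mul_mul (∑ i ∈ s, B i)
      (Matrix.isHermitian_conjTranspose_mul_self T)
    rw [Matrix.IsHermitian, Matrix.conjTranspose_sub, Matrix.conjTranspose_smul, star_natCast,
      h1, h2.eq]
  · intro x
    have hv : ∀ i, star x ⬝ᵥ (((B i)ᴴ * (Tᴴ * T) * B i) *ᵥ x)
        = star ((T * B i) *ᵥ x) ⬝ᵥ ((T * B i) *ᵥ x) := fun i => by rw [hre, form_conj]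
    have hv2 : star x ⬝ᵥ (((∑ i ∈ s, B i)ᴴ * (Tᴴ * T) * (∑ i ∈ s, B i)) *ᵥ x)
        = star (∑ i ∈ s, ((T * B i) *ᵥ x)) ⬝ᵥ (∑ i ∈ s, ((T * B i) *ᵥ x)) := by
      rw [hre, form_conj, Finset.mul_sum, sum_mulVec']
    rw [Matrix.sub_mulVec, dotProduct_sub, Matrix.smul_mulVec,
      dotProduct_smul, smul_eq_mul, hv2, sum_mulVec', dot_sum]
    simp_rw [hv]
    exact sub_nonneg.mpr (sum_dot_cs s _)

end general

lemma factor_facts {Y : Type} [Fintype Y] [DecidableEq Y] {P Q : Matrix Y Y ℂ} {η : ℝ}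
    (U : Matrix Y Y ℂ) (μ : Y → ℝ) (hU : U ∈ Matrix.unitaryGroup Y ℂ)
    (hP : P = U * Matrix.diagonal (fun a => (μ a : ℂ)) * U.conjTranspose)
    (hQ : Q = U * Matrix.diagonal (fun a => if η < μ a then (1 : ℂ) else 0) * U.conjTranspose) :
    Qᴴ = Q ∧ Q * Q = Q ∧
      ((η : ℂ) • (1 - Q) - (1 - Q) * P * (1 - Q)).PosSemidef := by
  have hUl : Uᴴ * U = 1 := by
    have := (Unitary.mem_iff.mp hU).1
    rwa [Matrix.star_eq_conjTranspose] at this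
  have hUr : U * Uᴴ = 1 := by
    have := (Unitary.mem_iff.mp hU).2
    rwa [Matrix.star_eq_conjTranspose] at this
  have hmul : ∀ d e : Y → ℂ, (U * Matrix.diagonal d * Uᴴ) * (U * Matrix.diagonal e * Uᴴ)
      = U * Matrix.diagonal (fun a => d a * e a) * Uᴴ := by
    intro d e
    simp only [Matrix.mul_assoc]
    rw [← Matrix.mul_assoc Uᴴ U, hUl, Matrix.one_mul,
      ← Matrix.mul_assoc (Matrix.diagonal d), Matrix.diagonal_mul_diagonal]
  have hsub : ∀ d e : Y → ℂ, (U * Matrix.diagonal d * Uᴴ) - (U * Matrix.diagonal e * Uᴴ)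
      = U * Matrix.diagonal (fun a => d a - e a) * Uᴴ := by
    intro d e
    rw [show Matrix.diagonal (fun a => d a - e a) = Matrix.diagonal d - Matrix.diagonal e from
      Matrix.diagonal_sub d e ▸ rfl]
    rw [Matrix.mul_sub, Matrix.sub_mul]
  have hsmul : ∀ (c : ℂ) (d : Y → ℂ), c • (U * Matrix.diagonal d * Uᴴ)
      = U * Matrix.diagonal (fun a => c * d a) * Uᴴ := by
    intro c d
    rw [show Matrix.diagonal (fun a => c * d a) = c • Matrix.diagonal d by
      rw [← Matrix.diagonal_smul]; rfl]
    rw [Matrix.mul_smul, Matrix.smul_mul]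
  have hone : (1 : Matrix Y Y ℂ) = U * Matrix.diagonal (fun _ => (1:ℂ)) * Uᴴ := by
    rw [show Matrix.diagonal (fun _ => (1:ℂ)) = (1 : Matrix Y Y ℂ) from Matrix.diagonal_one,
      Matrix.mul_one, hUr]
  have hherm : ∀ d : Y → ℂ, (U * Matrix.diagonal d * Uᴴ)ᴴ
      = U * Matrix.diagonal (fun a => star (d a)) * Uᴴ := by
    intro d
    simp only [Matrix.conjTranspose_mul, Matrix.conjTranspose_conjTranspose,
      Matrix.diagonal_conjTranspose, Matrix.mul_assoc]
    rfl
  have hpsd : ∀ d : Y → ℂ, (∀ a, 0 ≤ d a) →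
      (U * Matrix.diagonal d * Uᴴ).PosSemidef := by
    intro d hd
    exact (Matrix.posSemidef_diagonal_iff.mpr hd).mul_mul_conjTranspose_same U
  refine ⟨?_, ?_, ?_⟩
  · rw [hQ, hherm]
    have he : (fun a => star (if η < μ a then (1:ℂ) else 0))
        = (fun a => if η < μ a then (1:ℂ) else 0) := by
      funext a; by_cases h : η < μ a <;> simp [h]
    rw [he]
  · rw [hQ, hmul]
    have he : (fun a => (if η < μ a then (1:ℂ) else 0) * (if η < μ a then (1:ℂ) else 0))
        = (fun a => if η < μ a then (1:ℂ) else 0) := by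
      funext a; by_cases h : η < μ a <;> simp [h]
    rw [he]
  · have h1 : (1 : Matrix Y Y ℂ) - Q
        = U * Matrix.diagonal (fun a => 1 - (if η < μ a then (1:ℂ) else 0)) * Uᴴ := by
      rw [hQ, hone, hsub]
    rw [h1, hP, hmul, hmul, hsmul, hsub]
    refine hpsd _ fun a => ?_
    by_cases h : η < μ a
    · simp [h]
    · push_neg at h
      simp only [if_neg (not_lt.mpr h)]
      rw [show (↑η * ((1:ℂ) - 0) - ((1:ℂ) - 0) * ↑(μ a) * (1 - 0)) = ((η - μ a : ℝ) : ℂ) by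
        push_cast; ring]
      exact Complex.zero_le_real.mpr (by linarith)

section tensor
variable {n : ℕ} {X : Fin n → Type} [∀ i, Fintype (X i)] [∀ i, DecidableEq (X i)]

/-- The tensor product of matrices, defined entrywise. -/
def tp (A : (i : Fin n) → Matrix (X i) (X i) ℂ) :
    Matrix ((i : Fin n) → X i) ((i : Fin n) → X i) ℂ :=
  Matrix.of fun x y => ∏ i, A i (x i) (y i)

lemma tp_apply (A : (i : Fin n) → Matrix (X i) (X i) ℂ) (x y) :
    tp A x y = ∏ i, A i (x i) (y i) := rfl

lemma tp_mul (A B : (i : Fin n) → Matrix (X i) (X i) ℂ) :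
    tp A * tp B = tp (fun i => A i * B i) := by
  ext x y
  simp only [Matrix.mul_apply, tp_apply]
  rw [Fintype.prod_sum]
  exact Finset.sum_congr rfl fun z _ => (Finset.prod_mul_distrib).symm

lemma tp_one : tp (fun i => (1 : Matrix (X i) (X i) ℂ)) = 1 := by
  ext x y
  simp only [tp_apply, Matrix.one_apply, Finset.prod_boole]
  simp [funext_iff]

lemma tp_conjTranspose (A : (i : Fin n) → Matrix (X i) (X i) ℂ) :
    (tp A)ᴴ = tp (fun i => (A i)ᴴ) := by
  ext x y
  simp only [Matrix.conjTranspose_apply, tp_apply, star_prod]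

lemma tp_update_apply (k : Fin n) (B : Matrix (X k) (X k) ℂ) (x y) :
    tp (Function.update (fun i => (1 : Matrix (X i) (X i) ℂ)) k B) x y
      = B (x k) (y k) * ∏ i ∈ Finset.univ.erase k,
          (1 : Matrix (X i) (X i) ℂ) (x i) (y i) := by
  rw [tp_apply, ← Finset.mul_prod_erase Finset.univ _ (Finset.mem_univ k),
    Function.update_self]
  congr 1
  exact Finset.prod_congr rfl fun i hi =>
    by rw [Function.update_of_ne (Finset.ne_of_mem_erase hi)]

/-- `slot k B` : the operator `1 ⊗ ⋯ ⊗ B ⊗ ⋯ ⊗ 1` with `B` in slot `k`. -/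
def slot (k : Fin n) (B : Matrix (X k) (X k) ℂ) :
    Matrix ((i : Fin n) → X i) ((i : Fin n) → X i) ℂ :=
  tp (Function.update (fun i => (1 : Matrix (X i) (X i) ℂ)) k B)

lemma slot_apply (k : Fin n) (B : Matrix (X k) (X k) ℂ) (x y) :
    slot k B x y = B (x k) (y k) * ∏ i ∈ Finset.univ.erase k,
      (1 : Matrix (X i) (X i) ℂ) (x i) (y i) := tp_update_apply k B x y

lemma slot_one (k : Fin n) : slot k (1 : Matrix (X k) (X k) ℂ) = 1 := by
  rw [slot, show Function.update (fun i => (1 : Matrix (X i) (X i) ℂ)) k 1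
    = fun i => (1 : Matrix (X i) (X i) ℂ) from Function.update_eq_self k _, tp_one]

lemma slot_sub (k : Fin n) (B C : Matrix (X k) (X k) ℂ) :
    slot k (B - C) = slot k B - slot k C := by
  ext x y
  simp only [Matrix.sub_apply, slot_apply, sub_mul]

lemma slot_smul (k : Fin n) (c : ℂ) (B : Matrix (X k) (X k) ℂ) :
    slot k (c • B) = c • slot k B := by
  ext x y
  simp only [Matrix.smul_apply, slot_apply, smul_eq_mul, mul_assoc]

lemma slot_sum (k : Fin n) {ι : Type*} (s : Finset ι) (B : ι → Matrix (X k) (X k) ℂ) :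
    slot k (∑ r ∈ s, B r) = ∑ r ∈ s, slot k (B r) := by
  ext x y
  simp only [Matrix.sum_apply, slot_apply, Finset.sum_mul]

lemma slot_mul (k : Fin n) (B C : Matrix (X k) (X k) ℂ) :
    slot k B * slot k C = slot k (B * C) := by
  have h : (fun i => Function.update (fun j => (1 : Matrix (X j) (X j) ℂ)) k B i
      * Function.update (fun j => (1 : Matrix (X j) (X j) ℂ)) k C i)
      = Function.update (fun j => (1 : Matrix (X j) (X j) ℂ)) k (B * C) := by
    funext i
    rcases eq_or_ne i k with rfl | h
    · simp
    · simp [Function.update_of_ne h]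
  rw [slot, slot, tp_mul, h, slot]

lemma slot_conjTranspose (k : Fin n) (B : Matrix (X k) (X k) ℂ) :
    (slot k B)ᴴ = slot k Bᴴ := by
  have h : (fun i => (Function.update (fun j => (1 : Matrix (X j) (X j) ℂ)) k B i)ᴴ)
      = Function.update (fun j => (1 : Matrix (X j) (X j) ℂ)) k Bᴴ := by
    funext i
    rcases eq_or_ne i k with rfl | h
    · simp
    · simp [Function.update_of_ne h]
  rw [slot, slot, tp_conjTranspose, h]

lemma slot_psd (k : Fin n) {B : Matrix (X k) (X k) ℂ} (hB : B.PosSemidef) :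
    (slot k B).PosSemidef := by
  obtain ⟨C, rfl⟩ := psd_factor hB
  rw [← slot_mul, ← slot_conjTranspose]
  exact Matrix.posSemidef_conjTranspose_mul_self _

end tensor
end Stmt9Aux

open Stmt9Aux
open scoped Matrix

/-- mixed-state version of Statement 8: with `M_r^{(i)}`, `P^{(i)}`, `η`, and
the spectral projections `Π^{(i)}` as before, for every density matrix `ρ` (Hermitian PSD,
trace 1) on `ℂ^{X_1×⋯×X_n}`:
`(1/|R|)·Σ_r Tr[(⊗_i M_r^{(i)}) ρ (⊗_i M_r^{(i)})] ≤ (n+1)·(η + Tr[(⊗_i Π^{(i)}) ρ])`. -/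
theorem stmt9 {n : ℕ} (hn : 1 ≤ n) (X : Fin n → Type)
    [∀ i, Fintype (X i)] [∀ i, DecidableEq (X i)] [∀ i, Nonempty (X i)]
    {R : Type} [Fintype R] [Nonempty R]
    (M : R → (i : Fin n) → Matrix (X i) (X i) ℂ)
    (hMherm : ∀ r i, (M r i).IsHermitian)
    (hMidem : ∀ r i, M r i * M r i = M r i)
    (Pm : (i : Fin n) → Matrix (X i) (X i) ℂ)
    (hPm : ∀ i, Pm i = ((Fintype.card R : ℂ))⁻¹ • ∑ r : R, M r i)
    (η : ℝ) (hη0 : 0 ≤ η) (hη1 : η ≤ 1)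
    (Pj : (i : Fin n) → Matrix (X i) (X i) ℂ)
    (hPj : ∀ i, ∃ (U : Matrix (X i) (X i) ℂ) (μ : X i → ℝ),
      U ∈ Matrix.unitaryGroup (X i) ℂ ∧
      Pm i = U * Matrix.diagonal (fun a => (μ a : ℂ)) * U.conjTranspose ∧
      Pj i = U * Matrix.diagonal (fun a => if η < μ a then (1 : ℂ) else 0) * U.conjTranspose)
    (tensM : ((i : Fin n) → Matrix (X i) (X i) ℂ) →
      Matrix ((i : Fin n) → X i) ((i : Fin n) → X i) ℂ)
    (htensM : ∀ A xx yy, tensM A xx yy = ∏ i, A i (xx i) (yy i))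
    (ρ : Matrix ((i : Fin n) → X i) ((i : Fin n) → X i) ℂ)
    (hρ : ρ.PosSemidef) (hρtr : ρ.trace = 1) :
    (∑ r : R, ((tensM (M r) * ρ * tensM (M r)).trace).re) / (Fintype.card R : ℝ)
      ≤ ((n : ℝ) + 1) * (η + ((tensM Pj * ρ).trace).re) := by
  classical
  have hT : ∀ A, tensM A = tp A := fun A => by
    ext x y; rw [htensM]; rfl
  simp only [hT]
  set cR : ℕ := Fintype.card R with hcRdef
  have hcR0 : 0 < cR := Fintype.card_pos
  have hcRC : ((cR : ℂ)) ≠ 0 := Nat.cast_ne_zero.mpr hcR0.ne'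
  -- nonnegativity of various complex scalars
  have hreal : ∀ x : ℝ, 0 ≤ x → 0 ≤ (x : ℂ) := fun x hx => Complex.zero_le_real.mpr hx
  have hcRC0 : (0:ℂ) ≤ (cR : ℂ) := by
    rw [show ((cR:ℂ)) = (((cR:ℝ)) : ℂ) by push_cast; ring]
    exact hreal _ (by positivity)
  have hnC0 : (0:ℂ) ≤ (n : ℂ) := by
    rw [show ((n:ℂ)) = (((n:ℝ)) : ℂ) by push_cast; ring]
    exact hreal _ (by positivity)
  -- factor facts
  have hfac : ∀ i, (Pj i)ᴴ = Pj i ∧ Pj i * Pj i = Pj i ∧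
      ((η:ℂ) • (1 - Pj i) - (1 - Pj i) * Pm i * (1 - Pj i)).PosSemidef := by
    intro i
    obtain ⟨U, μ, hU, hPe, hQe⟩ := hPj i
    exact factor_facts U μ hU hPe hQe
  have hPjH : ∀ i, (Pj i)ᴴ = Pj i := fun i => (hfac i).1
  have hPjI : ∀ i, Pj i * Pj i = Pj i := fun i => (hfac i).2.1
  have hPjPSD := fun i => (hfac i).2.2
  -- projections on the big space
  have hNH : ∀ r, (tp (M r))ᴴ = tp (M r) := fun r => by
    rw [tp_conjTranspose, show (fun i => (M r i)ᴴ) = M r from funext fun i => hMherm r i]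
  have hNI : ∀ r, tp (M r) * tp (M r) = tp (M r) := fun r => by
    rw [tp_mul, show (fun i => M r i * M r i) = M r from funext fun i => hMidem r i]
  have hEH : (tp Pj)ᴴ = tp Pj := by
    rw [tp_conjTranspose, show (fun i => (Pj i)ᴴ) = Pj from funext fun i => hPjH i]
  have hEI : tp Pj * tp Pj = tp Pj := by
    rw [tp_mul, show (fun i => Pj i * Pj i) = Pj from funext fun i => hPjI i]
  have hEpsd : (tp Pj).PosSemidef := proj_psd hEH hEI
  set S : Matrix ((i : Fin n) → X i) ((i : Fin n) → X i) ℂ := ∑ r : R, tp (M r) with hSdef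
  have hSpsd : S.PosSemidef := psd_sum _ _ (fun r _ => proj_psd (hNH r) (hNI r))
  have hNle1 : ∀ r, ((1 : Matrix ((i : Fin n) → X i) ((i : Fin n) → X i) ℂ)
      - tp (M r)).PosSemidef := by
    intro r
    refine proj_psd ?_ ?_
    · rw [Matrix.conjTranspose_sub, Matrix.conjTranspose_one, hNH]
    · rw [Matrix.sub_mul, Matrix.one_mul, Matrix.mul_sub, Matrix.mul_one, hNI, sub_self,
        sub_zero]
  have hS1 : (((cR:ℂ)) • (1 : Matrix ((i : Fin n) → X i) ((i : Fin n) → X i) ℂ)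
      - S).PosSemidef := by
    have hc : (∑ _r : R, (1 : Matrix ((i : Fin n) → X i) ((i : Fin n) → X i) ℂ))
        = ((cR:ℂ)) • 1 := by
      rw [Finset.sum_const, Finset.card_univ, Nat.cast_smul_eq_nsmul]
    have h : ((cR:ℂ)) • (1 : Matrix ((i : Fin n) → X i) ((i : Fin n) → X i) ℂ) - S
        = ∑ r : R, ((1 : Matrix ((i : Fin n) → X i) ((i : Fin n) → X i) ℂ) - tp (M r)) := by
      rw [Finset.sum_sub_distrib, hc]
    rw [h]
    exact psd_sum _ _ fun r _ => hNle1 r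
  have hsumM : ∀ i, (∑ r : R, M r i) = ((cR:ℂ)) • Pm i := by
    intro i
    rw [hPm i, smul_smul, mul_inv_cancel₀ hcRC, one_smul]
  -- the chain of prefix projections
  set Am : ℕ → Matrix ((i : Fin n) → X i) ((i : Fin n) → X i) ℂ :=
    fun m => tp (fun i => if (i:ℕ) < m then Pj i else 1) with hAmdef
  have hAm0 : Am 0 = 1 := by
    simp only [hAmdef]
    rw [show (fun i : Fin n => if (i:ℕ) < 0 then Pj i else (1 : Matrix (X i) (X i) ℂ))
      = fun i => (1 : Matrix (X i) (X i) ℂ) from funext fun i => if_neg (Nat.not_lt_zero _)]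
    exact tp_one
  have hAmn : Am n = tp Pj := by
    simp only [hAmdef]
    rw [show (fun i : Fin n => if (i:ℕ) < n then Pj i else (1 : Matrix (X i) (X i) ℂ))
      = Pj from funext fun i => if_pos i.isLt]
  have hAmH : ∀ m, (Am m)ᴴ = Am m := by
    intro m
    simp only [hAmdef]; rw [tp_conjTranspose]
    exact congrArg tp (funext fun i => by by_cases h : (i:ℕ) < m <;> simp [h, hPjH i])
  have hAmI : ∀ m, Am m * Am m = Am m := by
    intro m
    simp only [hAmdef]; rw [tp_mul]
    exact (congrArg tp (funext fun i => by by_cases h : (i:ℕ) < m <;> simp [h, hPjI i])).symm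
  have hAmsucc : ∀ (m : ℕ) (hm : m < n),
      Am (m+1) = Am m * slot (⟨m, hm⟩ : Fin n) (Pj ⟨m, hm⟩) := by
    intro m hm
    simp only [hAmdef]; rw [slot, tp_mul]
    refine congrArg tp (funext fun i => ?_)
    beta_reduce
    rcases eq_or_ne i (⟨m, hm⟩ : Fin n) with rfl | hik
    · simp
    · have hv : (i:ℕ) ≠ m := fun h => hik (Fin.ext h)
      rw [Function.update_of_ne hik, mul_one]
      by_cases h : (i:ℕ) < m
      · rw [if_pos h, if_pos (Nat.lt_succ_of_lt h)]
      · rw [if_neg h, if_neg (fun hlt => h (lt_of_le_of_ne (Nat.lt_succ_iff.mp hlt) hv))]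
  have hcommAm : ∀ (m : ℕ) (k : Fin n), ¬((k:ℕ) < m) →
      ∀ B : Matrix (X k) (X k) ℂ, Am m * slot k B = slot k B * Am m := by
    intro m k hk B
    simp only [hAmdef]; rw [slot, tp_mul, tp_mul]
    refine congrArg tp (funext fun i => ?_)
    beta_reduce
    rcases eq_or_ne i k with rfl | hik
    · rw [if_neg hk, Function.update_self, one_mul, mul_one]
    · rw [Function.update_of_ne hik, mul_one, one_mul]
  -- the key per-step bound
  have hQbound : ∀ m, m < n →
      ((((cR:ℂ)) * (η:ℂ)) • (Am m - Am (m+1))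
        - (Am m - Am (m+1)) * S * (Am m - Am (m+1))).PosSemidef := by
    intro m hm
    set k : Fin n := ⟨m, hm⟩ with hkdef
    set G := Am m with hGdef
    set Pt := slot k (Pm k) with hPtdef
    set W := (1 : Matrix ((i : Fin n) → X i) ((i : Fin n) → X i) ℂ) - slot k (Pj k) with hWdef
    have hGW : Am m - Am (m+1) = G * W := by
      rw [hAmsucc m hm, hWdef, Matrix.mul_sub, Matrix.mul_one, hGdef]
    have hGH : Gᴴ = G := hAmH m
    have hGI : G * G = G := hAmI m
    have hcomm : ∀ B : Matrix (X k) (X k) ℂ, G * slot k B = slot k B * G :=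
      hcommAm m k (lt_irrefl m)
    have hcommW : G * W = W * G := by
      rw [hWdef, Matrix.mul_sub, Matrix.sub_mul, Matrix.mul_one, Matrix.one_mul, hcomm]
    have hWH : Wᴴ = W := by
      rw [hWdef, Matrix.conjTranspose_sub, Matrix.conjTranspose_one, slot_conjTranspose,
        hPjH k]
    -- S ≤ cR • Pt
    have hMt : ∀ r, (slot k (M r k) - tp (M r)).PosSemidef := by
      intro r
      have hMtH : (slot k (M r k))ᴴ = slot k (M r k) := by
        rw [slot_conjTranspose, (hMherm r k).eq]
      have h1 : slot k (M r k) * slot k (M r k) = slot k (M r k) := by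
        rw [slot_mul, hMidem r k]
      have h2 : slot k (M r k) * tp (M r) * slot k (M r k) = tp (M r) := by
        rw [slot, tp_mul, tp_mul]
        refine congrArg tp (funext fun i => ?_)
        beta_reduce
        rcases eq_or_ne i k with rfl | hik
        · rw [Function.update_self, hMidem, hMidem]
        · rw [Function.update_of_ne hik, one_mul, mul_one]
      have key : slot k (M r k) - tp (M r)
          = (slot k (M r k))ᴴ * (1 - tp (M r)) * slot k (M r k) := by
        rw [hMtH, Matrix.mul_sub, Matrix.mul_one, Matrix.sub_mul, h1, h2]
      rw [key]
      exact (hNle1 r).conjTranspose_mul_mul_same _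
    have hdsum : (((cR:ℂ)) • Pt - S).PosSemidef := by
      have h : ((cR:ℂ)) • Pt - S = ∑ r : R, (slot k (M r k) - tp (M r)) := by
        rw [Finset.sum_sub_distrib, ← slot_sum, hsumM k, slot_smul, hSdef, hPtdef]
      rw [h]
      exact psd_sum _ _ fun r _ => hMt r
    have hA1 : ((G*W)ᴴ * (((cR:ℂ)) • Pt - S) * (G*W)).PosSemidef :=
      hdsum.conjTranspose_mul_mul_same _
    have hfachere : ((η:ℂ) • W - W * Pt * W).PosSemidef := by
      have hWslot : W = slot k (1 - Pj k) := by
        rw [slot_sub, slot_one, hWdef]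
      have h : (η:ℂ) • W - W * Pt * W
          = slot k ((η:ℂ) • (1 - Pj k) - (1 - Pj k) * Pm k * (1 - Pj k)) := by
        rw [slot_sub, slot_smul, ← hWslot, ← slot_mul, ← slot_mul, ← hWslot, ← hPtdef]
      rw [h]
      exact slot_psd k (hPjPSD k)
    have hA2 : (G * ((η:ℂ) • W - W * Pt * W) * Gᴴ).PosSemidef :=
      hfachere.mul_mul_conjTranspose_same G
    have hGWG : G * W * G = G * W := by
      rw [Matrix.mul_assoc, ← hcommW, ← Matrix.mul_assoc, hGI]
    have hcommPt : G * Pt = Pt * G := hcomm (Pm k)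
    have hGWH : (G*W)ᴴ = G*W := by
      rw [Matrix.conjTranspose_mul, hWH, hGH, ← hcommW]
    have hmid : (G*W) * Pt * (G*W) = G * (W * Pt * W) * G := by
      simp only [Matrix.mul_assoc]
      rw [← hcommW]
    have final_eq : (((cR:ℂ)) * (η:ℂ)) • (G * W) - (G*W) * S * (G*W)
        = ((G*W)ᴴ * (((cR:ℂ)) • Pt - S) * (G*W))
          + ((cR:ℂ)) • (G * ((η:ℂ) • W - W * Pt * W) * Gᴴ) := by
      rw [hGWH, hGH]
      simp only [Matrix.mul_sub, Matrix.sub_mul, Matrix.mul_smul, Matrix.smul_mul]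
      rw [hmid, hGWG]
      module
    rw [hGW, final_eq]
    exact hA1.add (psd_smul hcRC0 hA2)
  -- telescoping
  have hsumQ : (∑ m ∈ Finset.range n, (Am m - Am (m+1))) = 1 - tp Pj := by
    rw [Finset.sum_range_sub' Am n, hAm0, hAmn]
  have hQSQsum : ((((cR:ℂ)) * (η:ℂ)) • ((1 : Matrix ((i : Fin n) → X i) ((i : Fin n) → X i) ℂ)
      - tp Pj) - ∑ m ∈ Finset.range n, (Am m - Am (m+1)) * S * (Am m - Am (m+1))).PosSemidef := by
    have h := psd_sum (Finset.range n) _ (fun m hm => hQbound m (Finset.mem_range.mp hm))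
    rwa [Finset.sum_sub_distrib, ← Finset.smul_sum, hsumQ] at h
  have hBH : ∀ m, (Am m - Am (m+1))ᴴ = Am m - Am (m+1) := fun m => by
    rw [Matrix.conjTranspose_sub, hAmH, hAmH]
  have hFH : ((1 : Matrix ((i : Fin n) → X i) ((i : Fin n) → X i) ℂ) - tp Pj)ᴴ
      = 1 - tp Pj := by
    rw [Matrix.conjTranspose_sub, Matrix.conjTranspose_one, hEH]
  have hCS := sum_cs_matrix (Finset.range n) hSpsd (fun m => Am m - Am (m+1))
  rw [Finset.card_range] at hCS
  simp only [hBH] at hCS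
  rw [hsumQ, hFH] at hCS
  -- FSF ≤ n cR η • 1
  have hnRη0 : (0:ℂ) ≤ (n:ℂ) * (cR:ℂ) * (η:ℂ) := by
    rw [show (n:ℂ) * (cR:ℂ) * (η:ℂ) = ((((n:ℝ)) * ((cR:ℝ)) * η : ℝ) : ℂ) by push_cast; ring]
    exact hreal _ (by positivity)
  have hFSF : (((n:ℂ) * (cR:ℂ) * (η:ℂ)) • (1 : Matrix ((i : Fin n) → X i)
      ((i : Fin n) → X i) ℂ) - (1 - tp Pj) * S * (1 - tp Pj)).PosSemidef := by
    have h2 := psd_smul hnC0 hQSQsum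
    have h3 := psd_smul hnRη0 hEpsd
    have h := (hCS.add h2).add h3
    have heq : ((n:ℂ) • (∑ m ∈ Finset.range n, (Am m - Am (m+1)) * S * (Am m - Am (m+1)))
          - (1 - tp Pj) * S * (1 - tp Pj))
        + (n:ℂ) • ((((cR:ℂ)) * (η:ℂ)) • ((1 : Matrix ((i : Fin n) → X i)
            ((i : Fin n) → X i) ℂ) - tp Pj)
          - ∑ m ∈ Finset.range n, (Am m - Am (m+1)) * S * (Am m - Am (m+1)))
        + ((n:ℂ) * (cR:ℂ) * (η:ℂ)) • tp Pj
        = ((n:ℂ) * (cR:ℂ) * (η:ℂ)) • (1 : Matrix ((i : Fin n) → X i)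
            ((i : Fin n) → X i) ℂ) - (1 - tp Pj) * S * (1 - tp Pj) := by
      module
    rwa [heq] at h
  -- ESE ≤ cR • E
  have hESE : (((cR:ℂ)) • tp Pj - tp Pj * S * tp Pj).PosSemidef := by
    have h := hS1.conjTranspose_mul_mul_same (tp Pj)
    rw [hEH] at h
    have heq : tp Pj * (((cR:ℂ)) • (1 : Matrix ((i : Fin n) → X i)
        ((i : Fin n) → X i) ℂ) - S) * tp Pj = ((cR:ℂ)) • tp Pj - tp Pj * S * tp Pj := by
      rw [Matrix.mul_sub, Matrix.sub_mul, Matrix.mul_smul, Matrix.smul_mul, Matrix.mul_one,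
        hEI]
    rwa [heq] at h
  -- master inequality
  have hB := hSpsd.conjTranspose_mul_mul_same (((n:ℂ)+1) • tp Pj - 1)
  have hBH' : ((((n:ℂ)+1)) • tp Pj - 1)ᴴ = ((n:ℂ)+1) • tp Pj - 1 := by
    rw [Matrix.conjTranspose_sub, Matrix.conjTranspose_smul, Matrix.conjTranspose_one, hEH]
    congr 1
    simp
  rw [hBH'] at hB
  have eqB : (((n:ℂ)+1) • tp Pj - 1) * S * (((n:ℂ)+1) • tp Pj - 1)
      = ((n:ℂ)*((n:ℂ)+1)) • (tp Pj * S * tp Pj)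
        + ((n:ℂ)+1) • ((1 - tp Pj) * S * (1 - tp Pj)) - (n:ℂ) • S := by
    simp only [Matrix.sub_mul, Matrix.mul_sub, Matrix.smul_mul, Matrix.mul_smul,
      Matrix.one_mul, Matrix.mul_one, smul_sub, smul_smul, mul_assoc, smul_add, sub_mul,
      mul_sub, one_mul, mul_one]
    module
  rw [eqB] at hB
  have hnn10 : (0:ℂ) ≤ (n:ℂ) * ((n:ℂ)+1) := by
    rw [show (n:ℂ) * ((n:ℂ)+1) = ((((n:ℝ)) * (((n:ℝ))+1) : ℝ) : ℂ) by push_cast; ring]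
    exact hreal _ (by positivity)
  have hn10 : (0:ℂ) ≤ (n:ℂ)+1 := by
    rw [show (n:ℂ)+1 = (((((n:ℝ))+1) : ℝ) : ℂ) by push_cast; ring]
    exact hreal _ (by positivity)
  have hmaster : (((n:ℂ)*((n:ℂ)+1)*(cR:ℂ)) • tp Pj
      + ((n:ℂ)*((n:ℂ)+1)*(cR:ℂ)*(η:ℂ)) • (1 : Matrix ((i : Fin n) → X i)
        ((i : Fin n) → X i) ℂ) - (n:ℂ) • S).PosSemidef := by
    have p2 := psd_smul hnn10 hESE
    have p3 := psd_smul hn10 hFSF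
    have h := (hB.add p2).add p3
    have heq : (((n:ℂ)*((n:ℂ)+1)) • (tp Pj * S * tp Pj)
          + ((n:ℂ)+1) • ((1 - tp Pj) * S * (1 - tp Pj)) - (n:ℂ) • S)
        + ((n:ℂ)*((n:ℂ)+1)) • (((cR:ℂ)) • tp Pj - tp Pj * S * tp Pj)
        + ((n:ℂ)+1) • (((n:ℂ) * (cR:ℂ) * (η:ℂ)) • (1 : Matrix ((i : Fin n) → X i)
            ((i : Fin n) → X i) ℂ) - (1 - tp Pj) * S * (1 - tp Pj))
        = ((n:ℂ)*((n:ℂ)+1)*(cR:ℂ)) • tp Pj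
          + ((n:ℂ)*((n:ℂ)+1)*(cR:ℂ)*(η:ℂ)) • (1 : Matrix ((i : Fin n) → X i)
            ((i : Fin n) → X i) ℂ) - (n:ℂ) • S := by
      module
    rwa [heq] at h
  -- take the trace against ρ
  have htr := psd_trace_mul hmaster hρ
  have htrexp : ((((n:ℂ)*((n:ℂ)+1)*(cR:ℂ)) • tp Pj
      + ((n:ℂ)*((n:ℂ)+1)*(cR:ℂ)*(η:ℂ)) • (1 : Matrix ((i : Fin n) → X i)
        ((i : Fin n) → X i) ℂ) - (n:ℂ) • S) * ρ).trace
      = ((n:ℂ)*((n:ℂ)+1)*(cR:ℂ)) * (tp Pj * ρ).trace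
        + ((n:ℂ)*((n:ℂ)+1)*(cR:ℂ)*(η:ℂ))
        - (n:ℂ) * ∑ r : R, (tp (M r) * ρ).trace := by
    rw [Matrix.sub_mul, Matrix.add_mul, Matrix.smul_mul, Matrix.smul_mul, Matrix.smul_mul,
      Matrix.one_mul, Matrix.trace_sub, Matrix.trace_add, Matrix.trace_smul,
      Matrix.trace_smul, Matrix.trace_smul, hρtr, hSdef, Finset.sum_mul, Matrix.trace_sum]
    simp [smul_eq_mul]
  rw [htrexp] at htr
  have hre := (Complex.le_def.mp htr).1
  rw [Complex.zero_re] at hre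
  rw [show (n:ℂ)*((n:ℂ)+1)*(cR:ℂ) = ((((n:ℝ)*((n:ℝ)+1)*(cR:ℝ)) : ℝ) : ℂ) by push_cast; ring,
    show ((((n:ℝ)*((n:ℝ)+1)*(cR:ℝ)) : ℝ) : ℂ) * (η:ℂ)
      = ((((n:ℝ)*((n:ℝ)+1)*(cR:ℝ)*η) : ℝ) : ℂ) by push_cast; ring,
    show (n:ℂ) = (((n:ℝ)) : ℂ) by push_cast; ring] at hre
  rw [Complex.sub_re, Complex.add_re, Complex.re_ofReal_mul, Complex.re_ofReal_mul,
    Complex.ofReal_re, Complex.re_sum] at hre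
  -- rewrite the goal
  have hcyc : ∀ r, (tp (M r) * ρ * tp (M r)).trace = (tp (M r) * ρ).trace := by
    intro r
    rw [Matrix.trace_mul_cycle, hNI r]
  simp only [hcyc]
  -- final real arithmetic
  set z : ℝ := ((tp Pj * ρ).trace).re with hzdef
  set w : ℝ := ∑ r : R, ((tp (M r) * ρ).trace).re with hwdef
  have hnR : (1:ℝ) ≤ (n:ℝ) := by exact_mod_cast hn
  have hnpos : (0:ℝ) < (n:ℝ) := by linarith
  have hcRpos : (0:ℝ) < (cR:ℝ) := by exact_mod_cast hcR0
  have hkey : (n:ℝ) * w ≤ (n:ℝ) * (((n:ℝ)+1) * (cR:ℝ) * (η + z)) := by nlinarith [hre]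
  have hkey2 : w ≤ ((n:ℝ)+1) * (cR:ℝ) * (η + z) :=
    le_of_mul_le_mul_left hkey hnpos
  rw [div_le_iff₀ hcRpos]
  calc w ≤ ((n:ℝ)+1) * (cR:ℝ) * (η + z) := hkey2
  _ = ((n:ℝ)+1) * (η + z) * (cR:ℝ) := by ring
end
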